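/- arXiv:1911.11600 — 2 statements merged into one kernel-verified Lean document; each statement's English description precedes it below -/
import Mathlib

section
/- (Knapp-type lower bound, q > p.) Let d ≥ 1, 0 ≤ j < d, 0 ≤ θ ≤ 1, and let p < q satisfy q = ((d−j−θ+2)/(d−j−θ))·p'. Then there is c = c(d,p,q) > 0 such that for every integer N ≥ 2, every 0 < ε₀ < 1, every ℓ ∈ (0,∞)^d with l₁ ≤ ⋯ ≤ l_d, and every g elliptic over Q^ℓ with parameters (N, ε₀): ‖E^ℓ_g‖^{RWT}_{L^p→L^q} ≥ c·(l₁⋯l_j·l_{j+1}^{θ})^{1/p' − 1/q}. -/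
open MeasureTheory ENNReal Filter
open scoped RealInnerProductSpace
noncomputable section

/-- `d`-dimensional Euclidean space. -/
abbrev Euc (d : ℕ) : Type := EuclideanSpace ℝ (Fin d)

/-- The `i`-th standard basis vector of `Euc d`. -/
def stdb (d : ℕ) (i : Fin d) : Euc d := EuclideanSpace.single i 1

/-- The open box `Q^ℓ = ∏_i (-ℓ i, ℓ i)`, with sidelengths in `(0,∞]` encoded in `ℝ≥0∞`. -/
def Qset (d : ℕ) (ℓ : Fin d → ℝ≥0∞) : Set (Euc d) :=
  {ξ | ∀ i, ENNReal.ofReal |ξ i| < ℓ i}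

/-- The Hölder conjugate exponent `p' = p/(p-1)`, computed in `ℝ≥0∞`. -/
def hconj (p : ℝ≥0∞) : ℝ≥0∞ := (1 - 1 / p)⁻¹

/-- The perturbation `h = g - |·|²`. -/
def pert (d : ℕ) (g : Euc d → ℝ) : Euc d → ℝ := fun ξ => g ξ - ‖ξ‖ ^ 2

/-- The coordinatewise scaling map `A^c (x) = (c 1 * x 1, …, c d * x d)`. -/
def scaleMap (d : ℕ) (c : Fin d → ℝ) (x : Euc d) : Euc d := WithLp.toLp 2 (fun i => c i * x i)

/-- The second-order partial derivative `∂_i ∂_j f (ξ)`, an entry of the Hessian `D²f(ξ)`. -/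
def d2 (d : ℕ) (f : Euc d → ℝ) (ξ : Euc d) (i j : Fin d) : ℝ :=
  iteratedFDeriv ℝ 2 f ξ ![stdb d i, stdb d j]

/-- `g` is elliptic over the box `Q^ℓ` with parameters `(N, ε₀)`:  `g` is `C^{N+2}` on `Q^ℓ`
with positive definite Hessian, `g = |·|² + h` with `h` vanishing to second order at `0`, and
for every finite box `Q^c ⊆ Q^ℓ` all partial derivatives of order `≤ N` of all entries of
`(D²h) ∘ A^c` are `< ε₀` in absolute value on `Q^𝟙`. -/
structure IsElliptic (d : ℕ) (ℓ : Fin d → ℝ≥0∞) (g : Euc d → ℝ) (N : ℕ) (ε₀ : ℝ) : Prop where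
  smooth : ContDiffOn ℝ (N + 2) g (Qset d ℓ)
  posdef : ∀ ξ ∈ Qset d ℓ, ∀ v : Euc d, v ≠ 0 → 0 < iteratedFDeriv ℝ 2 g ξ ![v, v]
  zero : pert d g 0 = 0
  grad_zero : fderiv ℝ (pert d g) 0 = 0
  hess_zero : ∀ i j, d2 d (pert d g) 0 i j = 0
  bound : ∀ c : Fin d → ℝ, (∀ i, 0 < c i) →
    Qset d (fun i => ENNReal.ofReal (c i)) ⊆ Qset d ℓ →
    ∀ m : ℕ, m ≤ N → ∀ i j : Fin d, ∀ v : Fin m → Fin d,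
      ∀ ξ ∈ Qset d (fun _ => 1),
        |iteratedFDeriv ℝ m (fun x => d2 d (pert d g) (scaleMap d c x) i j) ξ
          (fun r => stdb d (v r))| < ε₀

/-- The extension operator `E^ℓ_g f (t,x) = ∫_{Q^ℓ} e^{i(t g(ξ) + x·ξ)} f(ξ) dξ`. -/
def extOp (d : ℕ) (ℓ : Fin d → ℝ≥0∞) (g : Euc d → ℝ) (f : Euc d → ℂ)
    (tx : ℝ × Euc d) : ℂ :=
  ∫ ξ in Qset d ℓ, Complex.exp (Complex.I * ((tx.1 * g ξ + inner ℝ ξ tx.2 : ℝ) : ℂ)) * f ξ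

/-- The `L^p(Q^ℓ) → L^q(ℝ^{1+d})` operator norm of `E^ℓ_g`. -/
def extOpNorm (d : ℕ) (ℓ : Fin d → ℝ≥0∞) (g : Euc d → ℝ) (p q : ℝ≥0∞) : ℝ≥0∞ :=
  sInf {C : ℝ≥0∞ | ∀ f : Euc d → ℂ, MemLp f p (volume.restrict (Qset d ℓ)) →
    eLpNorm (extOp d ℓ g f) q volume ≤ C * eLpNorm f p (volume.restrict (Qset d ℓ))}

/-- The pairing `⟨u, v⟩ = ∫ u conj(v)` on `ℝ^{1+d}`. -/
def pairing (d : ℕ) (u v : ℝ × Euc d → ℂ) : ℂ := ∫ y, u y * (starRingEnd ℂ) (v y)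

/-- The restricted weak type `(p,q)` "norm" of an operator `T` acting on functions
supported in `S`. -/
def rwtNormOp (d : ℕ) (S : Set (Euc d)) (T : (Euc d → ℂ) → (ℝ × Euc d) → ℂ)
    (p q : ℝ≥0∞) : ℝ≥0∞ :=
  ⨆ (E : Set (Euc d)) (F : Set (ℝ × Euc d)) (fE : Euc d → ℂ) (gF : ℝ × Euc d → ℂ)
    (_ : MeasurableSet E) (_ : E ⊆ S) (_ : 0 < volume E) (_ : volume E < ⊤)
    (_ : MeasurableSet F) (_ : 0 < volume F) (_ : volume F < ⊤)
    (_ : Measurable fE) (_ : ∀ x, ‖fE x‖ ≤ E.indicator (fun _ => (1 : ℝ)) x)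
    (_ : Measurable gF) (_ : ∀ y, ‖gF y‖ ≤ F.indicator (fun _ => (1 : ℝ)) y),
    ENNReal.ofReal ‖pairing d (T fE) gF‖ /
      (volume E ^ (1 / p).toReal * volume F ^ (1 - (1 / q).toReal))

/-- The restricted weak type norm `‖E^ℓ_g‖^{RWT}_{L^p → L^q}`. -/
def rwtNorm (d : ℕ) (ℓ : Fin d → ℝ≥0∞) (g : Euc d → ℝ) (p q : ℝ≥0∞) : ℝ≥0∞ :=
  rwtNormOp d (Qset d ℓ) (extOp d ℓ g) p q

/-- The product `l₁ ⋯ l_j` of the first `j` sidelengths. -/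
def sidep (d : ℕ) (ℓ : Fin d → ℝ≥0∞) (j : ℕ) : ℝ≥0∞ :=
  ∏ i ∈ Finset.univ.filter (fun i : Fin d => (i : ℕ) < j), ℓ i
lemma euc_sum {d : ℕ} (u : Euc d) : ∑ i, u i • stdb d i = u := by
  classical
  ext k
  have h0 : (∑ i : Fin d, u i • stdb d i) k
      = EuclideanSpace.proj (𝕜 := ℝ) k (∑ i : Fin d, u i • stdb d i) := rfl
  rw [h0, map_sum]
  have hterm : ∀ i : Fin d, EuclideanSpace.proj (𝕜 := ℝ) k (u i • stdb d i)
      = u i * (if k = i then 1 else 0) := by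
    intro i
    have h1 : EuclideanSpace.proj (𝕜 := ℝ) k (stdb d i) = if k = i then 1 else 0 := by
      show stdb d i k = _
      rw [stdb, EuclideanSpace.single_apply]
    rw [_root_.map_smul, h1]; simp
  rw [Finset.sum_congr rfl fun i _ => hterm i]
  simp

lemma abs_coord_le {d : ℕ} (u : Euc d) (i : Fin d) : |u i| ≤ ‖u‖ := by
  have h1 : ⟪stdb d i, u⟫ = u i := by
    simp [stdb, EuclideanSpace.inner_single_left]
  have h2 := abs_real_inner_le_norm (stdb d i) u
  rw [h1] at h2
  simpa [stdb, EuclideanSpace.norm_single] using h2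

lemma isOpen_Qset (d : ℕ) (ℓ : Fin d → ℝ≥0∞) : IsOpen (Qset d ℓ) := by
  have : Qset d ℓ = ⋂ i, {ξ : Euc d | ENNReal.ofReal |ξ i| < ℓ i} := by
    ext ξ; simp [Qset, Set.mem_iInter]
  rw [this]
  refine isOpen_iInter_of_finite fun i => ?_
  have hc : Continuous fun ξ : Euc d => ENNReal.ofReal |ξ i| :=
    ENNReal.continuous_ofReal.comp ((continuous_apply i).comp (PiLp.continuous_ofLp 2 _)).abs
  exact isOpen_lt hc continuous_const

lemma mem_box {d : ℕ} (lam : Fin d → ℝ) (hlam : ∀ i, 0 < lam i) (ξ : Euc d) :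
    ξ ∈ Qset d (fun i => ENNReal.ofReal (lam i)) ↔ ∀ i, |ξ i| < lam i := by
  unfold Qset
  simp only [Set.mem_setOf_eq]
  exact forall_congr' fun i => ENNReal.ofReal_lt_ofReal_iff (hlam i)

lemma convex_box {d : ℕ} (lam : Fin d → ℝ) (hlam : ∀ i, 0 < lam i) :
    Convex ℝ (Qset d (fun i => ENNReal.ofReal (lam i))) := by
  intro x hx y hy s t hs ht hst
  rw [mem_box lam hlam] at *
  intro i
  have hx' := hx i; have hy' := hy i
  have : |(s • x + t • y : Euc d) i| ≤ s * |x i| + t * |y i| := by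
    have he : (s • x + t • y : Euc d) i = s * x i + t * y i := rfl
    rw [he]
    refine (abs_add_le _ _).trans ?_
    simp [abs_mul, abs_of_nonneg hs, abs_of_nonneg ht]
  refine this.trans_lt ?_
  rcases eq_or_lt_of_le hs with h0 | h0
  · have ht1 : t = 1 := by linarith
    simp only [← h0, zero_mul, zero_add, ht1, one_mul]
    exact hy'
  · calc s * |x i| + t * |y i| < s * lam i + t * lam i := by
          refine add_lt_add_of_lt_of_le ((mul_lt_mul_iff_right₀ h0).2 hx') ?_
          exact mul_le_mul_of_nonneg_left hy'.le ht
    _ = lam i := by rw [← add_mul, hst, one_mul]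

lemma volume_box {d : ℕ} (lam : Fin d → ℝ) (hlam : ∀ i, 0 < lam i) :
    volume (Qset d (fun i => ENNReal.ofReal (lam i))) = ENNReal.ofReal (∏ i, (2 * lam i)) := by
  have hset : Qset d (fun i => ENNReal.ofReal (lam i)) =
      (MeasurableEquiv.toLp 2 (Fin d → ℝ)).symm ⁻¹'
        (Set.univ.pi fun i => Set.Ioo (-(lam i)) (lam i)) := by
    ext ξ
    rw [mem_box lam hlam]
    simp only [Set.mem_preimage, Set.mem_pi, Set.mem_univ, forall_true_left, Set.mem_Ioo]
    exact forall_congr' fun i => abs_lt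
  rw [hset, (EuclideanSpace.volume_preserving_symm_measurableEquiv_toLp (Fin d)).measure_preimage
    ((MeasurableSet.univ_pi fun i => measurableSet_Ioo).nullMeasurableSet)]
  rw [volume_pi_pi]
  have hh : ∀ i : Fin d, volume (Set.Ioo (-lam i) (lam i)) = ENNReal.ofReal (2 * lam i) := by
    intro i; rw [Real.volume_Ioo]; congr 1; ring
  rw [Finset.prod_congr rfl fun i _ => hh i,
    ← ENNReal.ofReal_prod_of_nonneg (fun i _ => by have := hlam i; positivity)]

lemma norm_sq_eq_sum' {d : ℕ} (ξ : Euc d) : ‖ξ‖ ^ 2 = ∑ i, (ξ i) ^ 2 := by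
  rw [EuclideanSpace.norm_eq, Real.sq_sqrt (Finset.sum_nonneg fun i _ => sq_nonneg _)]
  exact Finset.sum_congr rfl fun i _ => by rw [Real.norm_eq_abs, sq_abs]

lemma hess_op_bound {d : ℕ} (L : Euc d →L[ℝ] Euc d →L[ℝ] ℝ) (C : ℝ) (hC : 0 ≤ C)
    (h : ∀ i j, |L (stdb d i) (stdb d j)| ≤ C) : ‖L‖ ≤ (d : ℝ) ^ 2 * C := by
  have expand : ∀ u v : Euc d, L u v = ∑ i, ∑ j, u i * v j * (L (stdb d i) (stdb d j)) := by
    intro u v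
    conv_lhs => rw [← euc_sum u]
    rw [map_sum, ContinuousLinearMap.sum_apply]
    refine Finset.sum_congr rfl fun i _ => ?_
    rw [_root_.map_smul, ContinuousLinearMap.smul_apply]
    conv_lhs => rw [← euc_sum v, map_sum]
    rw [smul_eq_mul, Finset.mul_sum]
    refine Finset.sum_congr rfl fun j _ => ?_
    rw [_root_.map_smul, smul_eq_mul]
    ring
  refine ContinuousLinearMap.opNorm_le_bound _ (by positivity) fun u => ?_
  refine ContinuousLinearMap.opNorm_le_bound _ (by positivity) fun v => ?_
  rw [expand u v, Real.norm_eq_abs]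
  calc |∑ i, ∑ j, u i * v j * (L (stdb d i) (stdb d j))|
      ≤ ∑ i, |∑ j, u i * v j * (L (stdb d i) (stdb d j))| := Finset.abs_sum_le_sum_abs _ _
    _ ≤ ∑ i : Fin d, ∑ j : Fin d, |u i * v j * (L (stdb d i) (stdb d j))| :=
        Finset.sum_le_sum fun i _ => Finset.abs_sum_le_sum_abs _ _
    _ ≤ ∑ i : Fin d, ∑ j : Fin d, ‖u‖ * ‖v‖ * C := by
        refine Finset.sum_le_sum fun i _ => Finset.sum_le_sum fun j _ => ?_
        rw [abs_mul, abs_mul]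
        have h1 := abs_coord_le u i
        have h2 := abs_coord_le v j
        have := h i j
        have hn : (0:ℝ) ≤ ‖u‖ := norm_nonneg _
        have hn2 : (0:ℝ) ≤ ‖v‖ := norm_nonneg _
        have g1 : |u i| * |v j| ≤ ‖u‖ * ‖v‖ :=
          mul_le_mul h1 h2 (abs_nonneg _) hn
        exact mul_le_mul g1 this (abs_nonneg _) (by positivity)
    _ = (d:ℝ)^2 * C * ‖u‖ * ‖v‖ := by
        simp [Finset.sum_const, Finset.card_univ]
        ring

lemma pert_quad {d N : ℕ} {ε₀ : ℝ} {ℓ : Fin d → ℝ≥0∞} {g : Euc d → ℝ}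
    (hg : IsElliptic d ℓ g N ε₀) (hε : ε₀ ≤ 1)
    (lam : Fin d → ℝ) (hlam : ∀ i, 0 < lam i)
    (hsub : Qset d (fun i => ENNReal.ofReal (lam i)) ⊆ Qset d ℓ) :
    ∀ ξ ∈ Qset d (fun i => ENNReal.ofReal (lam i)), |pert d g ξ| ≤ (d:ℝ)^2 * ‖ξ‖^2 := by
  intro ξ hξ
  set B := Qset d (fun i => ENNReal.ofReal (lam i)) with hB
  set h := pert d g with hh
  -- smoothness of h on the open set Qset d ℓ
  have hsq : ContDiff ℝ 2 (fun ξ : Euc d => ‖ξ‖^2) := by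
    exact contDiff_norm_sq ℝ
  have hCDh : ContDiffOn ℝ 2 h (Qset d ℓ) := by
    have : ContDiffOn ℝ 2 g (Qset d ℓ) := hg.smooth.of_le (by exact_mod_cast by omega)
    exact this.sub (hsq.contDiffOn)
  have hopen : IsOpen (Qset d ℓ) := isOpen_Qset d ℓ
  have hat : ∀ x ∈ Qset d ℓ, ContDiffAt ℝ 2 h x := fun x hx =>
    hCDh.contDiffAt (hopen.mem_nhds hx)
  have hdiff : ∀ x ∈ Qset d ℓ, DifferentiableAt ℝ h x := fun x hx =>
    (hat x hx).differentiableAt (by norm_num)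
  have hdf : ∀ x ∈ Qset d ℓ, DifferentiableAt ℝ (fderiv ℝ h) x := by
    intro x hx
    have : ContDiffAt ℝ 1 (fderiv ℝ h) x := (hat x hx).fderiv_right (by norm_num)
    exact this.differentiableAt (by norm_num)
  -- entrywise Hessian bound on B
  have hentry : ∀ η ∈ B, ∀ i j, |fderiv ℝ (fderiv ℝ h) η (stdb d i) (stdb d j)| ≤ 1 := by
    intro η hη i j
    set x : Euc d := WithLp.toLp 2 (fun k => η k / lam k : Fin d → ℝ) with hx
    have hxmem : x ∈ Qset d (fun _ => 1) := by
      intro k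
      have : |η k| < lam k := (mem_box lam hlam η).1 hη k
      have : |x k| < 1 := by
        rw [hx, PiLp.toLp_apply]
        have hl := hlam k
        rw [abs_div, abs_of_pos hl, div_lt_one hl]
        exact this
      calc ENNReal.ofReal |x k| < ENNReal.ofReal 1 := by
            rw [ENNReal.ofReal_lt_ofReal_iff one_pos]; exact this
        _ = 1 := ENNReal.ofReal_one
    have hscale : scaleMap d lam x = η := by
      ext k
      show lam k * (η k / lam k) = η k
      rw [mul_comm, div_mul_cancel₀ _ (hlam k).ne']
    have hb := hg.bound lam hlam hsub 0 (Nat.zero_le N) i j Fin.elim0 x hxmem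
    rw [iteratedFDeriv_zero_apply] at hb
    rw [hscale] at hb
    have hd2 : d2 d h η i j = fderiv ℝ (fderiv ℝ h) η (stdb d i) (stdb d j) := by
      rw [d2, iteratedFDeriv_two_apply]
      simp
    rw [← hd2]
    exact le_trans hb.le hε
  -- operator norm bound
  have hop : ∀ η ∈ B, ‖fderiv ℝ (fderiv ℝ h) η‖ ≤ (d:ℝ)^2 := by
    intro η hη
    have := hess_op_bound (fderiv ℝ (fderiv ℝ h) η) 1 zero_le_one (hentry η hη)
    simpa using this
  have h0B : (0 : Euc d) ∈ B := by
    rw [hB, mem_box lam hlam]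
    intro i; simpa using hlam i
  have hBsub : B ⊆ Qset d ℓ := hsub
  -- first mean value: gradient bound on B
  have hgrad : ∀ η ∈ B, ‖fderiv ℝ h η‖ ≤ (d:ℝ)^2 * ‖η‖ := by
    intro η hη
    have := Convex.norm_image_sub_le_of_norm_fderiv_le
      (f := fderiv ℝ h) (C := (d:ℝ)^2) (s := B)
      (fun x hx => hdf x (hBsub hx)) (fun x hx => hop x hx)
      (convex_box lam hlam) h0B hη
    rw [hg.grad_zero] at this
    simpa using this
  -- second mean value along the segment [0, ξ]
  have hseg : segment ℝ 0 ξ ⊆ B := (convex_box lam hlam).segment_subset h0B hξ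
  have hgseg : ∀ η ∈ segment ℝ 0 ξ, ‖fderiv ℝ h η‖ ≤ (d:ℝ)^2 * ‖ξ‖ := by
    intro η hη
    have hnorm : ‖η‖ ≤ ‖ξ‖ := by
      rw [segment_eq_image] at hη
      obtain ⟨θ, hθ, rfl⟩ := hη
      have hθξ : ‖(fun θ : ℝ => (1 - θ) • (0:Euc d) + θ • ξ) θ‖ = ‖θ‖ * ‖ξ‖ := by
        simp [norm_smul]
      rw [hθξ]
      have : ‖θ‖ ≤ 1 := by
        rw [Real.norm_eq_abs, abs_of_nonneg hθ.1]; exact hθ.2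
      calc ‖θ‖ * ‖ξ‖ ≤ 1 * ‖ξ‖ := mul_le_mul_of_nonneg_right this (norm_nonneg _)
        _ = ‖ξ‖ := one_mul _
    calc ‖fderiv ℝ h η‖ ≤ (d:ℝ)^2 * ‖η‖ := hgrad η (hseg hη)
      _ ≤ (d:ℝ)^2 * ‖ξ‖ := by
          exact mul_le_mul_of_nonneg_left hnorm (by positivity)
  have := Convex.norm_image_sub_le_of_norm_fderiv_le
    (f := h) (C := (d:ℝ)^2 * ‖ξ‖) (s := segment ℝ 0 ξ)
    (fun x hx => hdiff x (hBsub (hseg hx))) hgseg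
    (convex_segment 0 ξ) (left_mem_segment ℝ 0 ξ) (right_mem_segment ℝ 0 ξ)
  have hz : h 0 = 0 := hg.zero
  rw [hz] at this
  simp only [sub_zero] at this
  calc |h ξ| = ‖h ξ‖ := (Real.norm_eq_abs _).symm
    _ ≤ (d:ℝ)^2 * ‖ξ‖ * ‖ξ‖ := this
    _ = (d:ℝ)^2 * ‖ξ‖^2 := by ring

lemma card_filter_lt (d j : ℕ) (hj : j ≤ d) :
    (Finset.univ.filter fun i : Fin d => (i : ℕ) < j).card = j := by
  have : (Finset.univ.filter fun i : Fin d => (i : ℕ) < j)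
      = (Finset.univ : Finset (Fin j)).map (Fin.castLEEmb hj) := by
    ext i
    simp only [Finset.mem_filter, Finset.mem_univ, true_and, Finset.mem_map]
    constructor
    · intro hi
      refine ⟨⟨(i : ℕ), hi⟩, ?_⟩
      ext
      simp
    · rintro ⟨k, -, rfl⟩
      simpa using k.2
  rw [this, Finset.card_map, Finset.card_univ, Fintype.card_fin]

lemma key_alg (L M δc a b k c2 : ℝ) (hL : 0 < L) (hM : 0 < M) (hδ : 0 < δc)
    (hc2 : 0 < c2) (hkey : k * (a - b) = 2 * b) :
    (c2 ^ a * δc ^ b) * L ^ (a - b)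
      = (c2 * (L * M ^ k)) ^ a * (δc / (M ^ (2:ℝ) * (L * M ^ k))) ^ b := by
  have hMk : 0 < M ^ k := Real.rpow_pos_of_pos hM k
  have hM2 : 0 < M ^ (2:ℝ) := Real.rpow_pos_of_pos hM 2
  have hP : 0 < L * M ^ k := mul_pos hL hMk
  have h1 : 0 < (c2 ^ a * δc ^ b) * L ^ (a - b) := by positivity
  have h2 : 0 < (c2 * (L * M ^ k)) ^ a * (δc / (M ^ (2:ℝ) * (L * M ^ k))) ^ b := by positivity
  rw [← Real.exp_log h1, ← Real.exp_log h2]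
  congr 1
  have e1 : Real.log ((c2 ^ a * δc ^ b) * L ^ (a - b))
      = a * Real.log c2 + b * Real.log δc + (a - b) * Real.log L := by
    rw [Real.log_mul (by positivity) (by positivity),
      Real.log_mul (by positivity) (by positivity),
      Real.log_rpow hc2, Real.log_rpow hδ, Real.log_rpow hL]
  have f1 : Real.log (c2 * (L * M ^ k)) = Real.log c2 + (Real.log L + k * Real.log M) := by
    rw [Real.log_mul (by positivity) (by positivity),
      Real.log_mul (by positivity) (by positivity), Real.log_rpow hM]
  have f2 : Real.log (δc / (M ^ (2:ℝ) * (L * M ^ k)))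
      = Real.log δc - (2 * Real.log M + (Real.log L + k * Real.log M)) := by
    rw [Real.log_div (by positivity) (by positivity),
      Real.log_mul (by positivity) (by positivity),
      Real.log_mul (by positivity) (by positivity),
      Real.log_rpow hM, Real.log_rpow hM]
  have e2 : Real.log ((c2 * (L * M ^ k)) ^ a * (δc / (M ^ (2:ℝ) * (L * M ^ k))) ^ b)
      = a * (Real.log c2 + (Real.log L + k * Real.log M))
        + b * (Real.log δc - (2 * Real.log M + (Real.log L + k * Real.log M))) := by
    rw [Real.log_mul (by positivity) (by positivity),
      Real.log_rpow (by positivity), Real.log_rpow (by positivity), f1, f2]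
  rw [e1, e2]
  linear_combination (-Real.log M) * hkey

lemma conj_exp_eq {p q : ℝ≥0∞} (hp : 1 ≤ p) (hpq : p < q) :
    (1 / hconj p).toReal = 1 - (1 / p).toReal := by
  have hp_ne_top : p ≠ ⊤ := (hpq.trans_le le_top).ne
  have h1 : 1 / p ≤ 1 := by
    rw [one_div, ENNReal.inv_le_one]; exact hp
  rw [hconj, one_div, inv_inv, ENNReal.toReal_sub_of_le h1 one_ne_top]
  simp

lemma exp_identity (d j : ℕ) (hj : j < d) (θ : ℝ) (hθ : 0 ≤ θ) (hθ' : θ ≤ 1)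
    (p q : ℝ≥0∞) (hp : 1 ≤ p) (hpq : p < q)
    (hq : q = (((d : ℝ≥0∞) - j - ENNReal.ofReal θ + 2) /
      ((d : ℝ≥0∞) - j - ENNReal.ofReal θ)) * hconj p) :
    ((d : ℝ) - j - θ) * ((1 / hconj p).toReal - (1 / q).toReal) = 2 * (1 / q).toReal := by
  set k : ℝ := (d : ℝ) - j - θ with hk
  set a : ℝ := (1 / hconj p).toReal with ha
  have hjd : (1:ℝ) ≤ (d:ℝ) - j := by
    have : (j:ℝ) + 1 ≤ d := by exact_mod_cast hj
    linarith
  have hk0 : 0 ≤ k := by rw [hk]; linarith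
  have hKval : (d : ℝ≥0∞) - j - ENNReal.ofReal θ = ENNReal.ofReal k := by
    have h1 : (d : ℝ≥0∞) - j = ((d - j : ℕ) : ℝ≥0∞) := by
      rw [ENNReal.natCast_sub]
    rw [h1, show ((d - j : ℕ) : ℝ≥0∞) = ENNReal.ofReal ((d - j : ℕ) : ℝ) from
      (ENNReal.ofReal_natCast _).symm, ← ENNReal.ofReal_sub _ hθ]
    congr 1
    rw [Nat.cast_sub hj.le, hk]
  have hbase_ne_top : (1:ℝ≥0∞) - 1/p ≠ ⊤ :=
    (tsub_le_self.trans_lt (lt_top_iff_ne_top.2 one_ne_top)).ne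
  have hconj_ne_zero : hconj p ≠ 0 := by
    rw [hconj]; exact ENNReal.inv_ne_zero.2 hbase_ne_top
  rw [hKval] at hq
  rcases eq_or_lt_of_le hk0 with hk0' | hkpos
  · -- k = 0
    have hK0 : ENNReal.ofReal k = 0 := by rw [← hk0']; simp
    rw [hK0, zero_add, ENNReal.div_zero (by norm_num), ENNReal.top_mul hconj_ne_zero] at hq
    rw [hq]
    simp [← hk0']
  · -- k > 0
    have hR : (ENNReal.ofReal k + 2) / ENNReal.ofReal k = ENNReal.ofReal ((k + 2) / k) := by
      rw [ENNReal.ofReal_div_of_pos hkpos, ENNReal.ofReal_add hk0 (by norm_num)]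
      norm_num
    rw [hR] at hq
    have hne0 : ENNReal.ofReal ((k + 2) / k) ≠ 0 := by
      simp only [ne_eq, ENNReal.ofReal_eq_zero, not_le]
      positivity
    have hinv : (ENNReal.ofReal ((k + 2) / k))⁻¹ = ENNReal.ofReal (k / (k + 2)) := by
      rw [← ENNReal.ofReal_inv_of_pos (by positivity)]
      congr 1
      rw [inv_div]
    have hb : (1 / q).toReal = (k / (k + 2)) * a := by
      rw [hq, one_div, ENNReal.mul_inv (Or.inl hne0) (Or.inl ENNReal.ofReal_ne_top),
        hinv, ENNReal.toReal_mul, ENNReal.toReal_ofReal (by positivity), ha, one_div]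
    rw [hb]
    have hkne : k + 2 ≠ 0 := by positivity
    field_simp
    ring

set_option maxHeartbeats 2000000 in
/-- Knapp-type lower bound, `q > p`. -/
theorem statement11 (d j : ℕ) (hd : 1 ≤ d) (hj : j < d) (θ : ℝ) (hθ : 0 ≤ θ) (hθ' : θ ≤ 1)
    (p q : ℝ≥0∞) (hp : 1 ≤ p) (hpq : p < q)
    (hq : q = (((d : ℝ≥0∞) - j - ENNReal.ofReal θ + 2) /
      ((d : ℝ≥0∞) - j - ENNReal.ofReal θ)) * hconj p) :
    ∃ c : ℝ≥0∞, 0 < c ∧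
      ∀ N : ℕ, 2 ≤ N → ∀ ε₀ : ℝ, 0 < ε₀ → ε₀ < 1 →
        ∀ ℓ : Fin d → ℝ≥0∞, (∀ i, 0 < ℓ i ∧ ℓ i < ⊤) → Monotone ℓ →
          ∀ g : Euc d → ℝ, IsElliptic d ℓ g N ε₀ →
            c * (sidep d ℓ j * ℓ ⟨j, hj⟩ ^ θ) ^
                ((1 / hconj p).toReal - (1 / q).toReal) ≤
              rwtNorm d ℓ g p q := by
  classical
  set a : ℝ := (1 / hconj p).toReal with ha
  set b : ℝ := (1 / q).toReal with hb
  have hid : ((d : ℝ) - j - θ) * (a - b) = 2 * b :=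
    exp_identity d j hj θ hθ hθ' p q hp hpq hq
  have haconj : a = 1 - (1 / p).toReal := conj_exp_eq hp hpq
  have hd1 : (1:ℝ) ≤ (d:ℝ) := by exact_mod_cast hd
  set δc : ℝ := 1 / (8 * (d:ℝ)^3) with hδc
  have hδpos : 0 < δc := by positivity
  set C₀ : ℝ := 7/8 * ((2:ℝ)^d) ^ a * (((2*δc)^(d+1)) ^ b) with hC₀
  have hC₀pos : 0 < C₀ := by positivity
  refine ⟨ENNReal.ofReal C₀, ENNReal.ofReal_pos.2 hC₀pos, ?_⟩
  intro N hN ε₀ hε₀ hε₀' ℓ hℓ hmono g hg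
  -- Knapp box data
  set M : ℝ := (ℓ ⟨j, hj⟩).toReal with hM
  have hMpos : 0 < M := ENNReal.toReal_pos (hℓ _).1.ne' (hℓ _).2.ne
  set lam : Fin d → ℝ := fun i => if (i:ℕ) < j then (ℓ i).toReal else M with hlam_def
  have hlam : ∀ i, 0 < lam i := by
    intro i
    rw [hlam_def]
    dsimp only
    split
    · exact ENNReal.toReal_pos (hℓ i).1.ne' (hℓ i).2.ne
    · exact hMpos
  have hlamle : ∀ i, lam i ≤ M := by
    intro i
    rw [hlam_def]
    dsimp only
    split
    · rename_i hij
      refine ENNReal.toReal_mono (hℓ _).2.ne (hmono ?_)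
      exact le_of_lt (by rwa [Fin.lt_def])
    · exact le_rfl
  have hlamℓ : ∀ i, ENNReal.ofReal (lam i) ≤ ℓ i := by
    intro i
    rw [hlam_def]
    dsimp only
    split
    · rw [ENNReal.ofReal_toReal (hℓ i).2.ne]
    · rw [hM, ENNReal.ofReal_toReal (hℓ _).2.ne]
      exact hmono (by rw [Fin.le_def]; simpa using Nat.le_of_not_lt (by assumption))
  have hsub : Qset d (fun i => ENNReal.ofReal (lam i)) ⊆ Qset d ℓ := by
    intro ξ hξ i
    exact lt_of_lt_of_le (hξ i) (hlamℓ i)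
  set E : Set (Euc d) := Qset d (fun i => ENNReal.ofReal (lam i)) with hE
  set σv : Fin d → ℝ := fun i => δc / lam i with hσv
  have hσpos : ∀ i, 0 < σv i := fun i => div_pos hδpos (hlam i)
  set τ : ℝ := δc / M^2 with hτ
  have hτpos : 0 < τ := by positivity
  set Ebox : Set (Euc d) := Qset d (fun i => ENNReal.ofReal (σv i)) with hEbox
  set F : Set (ℝ × Euc d) := Set.Ioo (-τ) τ ×ˢ Ebox with hF
  set fE : Euc d → ℂ := E.indicator (fun _ => (1:ℂ)) with hfE
  set gF : (ℝ × Euc d) → ℂ := F.indicator (fun _ => (1:ℂ)) with hgF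
  have hmeasE : MeasurableSet E := (isOpen_Qset d _).measurableSet
  have hmeasEbox : MeasurableSet Ebox := (isOpen_Qset d _).measurableSet
  have hmeasF : MeasurableSet F := measurableSet_Ioo.prod hmeasEbox
  -- volumes
  set PE : ℝ := ∏ i, (2 * lam i) with hPE
  have hPEpos : 0 < PE := Finset.prod_pos fun i _ => by have := hlam i; positivity
  have hvolE : volume E = ENNReal.ofReal PE := volume_box lam hlam
  set PF : ℝ := (2 * τ) * ∏ i, (2 * σv i) with hPF
  have hPFpos : 0 < PF := by
    have : 0 < ∏ i, (2 * σv i) := Finset.prod_pos fun i _ => by have := hσpos i; positivity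
    positivity
  have hvolF : volume F = ENNReal.ofReal PF := by
    rw [hF, MeasureTheory.Measure.volume_eq_prod, MeasureTheory.Measure.prod_prod,
      Real.volume_Ioo, volume_box σv hσpos, hPF,
      ENNReal.ofReal_mul (by positivity)]
    congr 2
    ring
  -- phase bound
  set ph : (ℝ × Euc d) → Euc d → ℝ := fun y ξ => y.1 * g ξ + inner ℝ ξ y.2 with hph
  have hphase : ∀ y ∈ F, ∀ ξ ∈ E, |ph y ξ| ≤ 3/8 := by
    intro y hy ξ hξ
    obtain ⟨hy1, hy2⟩ := hy
    have hy1' : |y.1| < τ := abs_lt.2 ⟨hy1.1, hy1.2⟩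
    have hξi : ∀ i, |ξ i| < lam i := (mem_box lam hlam ξ).1 hξ
    have hy2i : ∀ i, |y.2 i| < σv i := (mem_box σv hσpos y.2).1 hy2
    have hd0 : (0:ℝ) < (d:ℝ) := by linarith
    -- bound on ‖ξ‖²
    have hnsq : ‖ξ‖^2 ≤ (d:ℝ) * M^2 := by
      rw [norm_sq_eq_sum']
      calc ∑ i, (ξ i)^2 ≤ ∑ i : Fin d, M^2 := by
            refine Finset.sum_le_sum fun i _ => ?_
            rw [← sq_abs]
            refine pow_le_pow_left₀ (abs_nonneg _) ?_ 2
            exact le_trans (hξi i).le (hlamle i)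
        _ = (d:ℝ) * M^2 := by
            rw [Finset.sum_const, Finset.card_univ, Fintype.card_fin, nsmul_eq_mul]
    -- bound on |g ξ|
    have hpert := pert_quad hg hε₀'.le lam hlam hsub ξ hξ
    have hgval : |g ξ| ≤ 2 * (d:ℝ)^3 * M^2 := by
      have hgd : g ξ = ‖ξ‖^2 + pert d g ξ := by rw [pert]; ring
      have hd3 : (d:ℝ) ≤ (d:ℝ)^3 := by nlinarith
      calc |g ξ| ≤ ‖ξ‖^2 + |pert d g ξ| := by
            rw [hgd]
            refine (abs_add_le _ _).trans ?_
            rw [abs_of_nonneg (sq_nonneg _)]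
        _ ≤ (d:ℝ) * M^2 + (d:ℝ)^2 * ‖ξ‖^2 := by
            have := hpert
            linarith
        _ ≤ (d:ℝ) * M^2 + (d:ℝ)^2 * ((d:ℝ) * M^2) := by
            nlinarith [sq_nonneg M, hnsq, sq_nonneg (d:ℝ)]
        _ ≤ 2 * (d:ℝ)^3 * M^2 := by nlinarith [sq_nonneg M]
    have ht : |y.1 * g ξ| ≤ 1/4 := by
      rw [abs_mul]
      calc |y.1| * |g ξ| ≤ τ * (2 * (d:ℝ)^3 * M^2) :=
            mul_le_mul hy1'.le hgval (abs_nonneg _) hτpos.le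
        _ = 2 * (d:ℝ)^3 * δc := by rw [hτ]; field_simp
        _ = 1/4 := by rw [hδc]; field_simp; ring
    have hx : |(inner ℝ ξ y.2 : ℝ)| ≤ 1/8 := by
      have hinner : (inner ℝ ξ y.2 : ℝ) = ∑ i, ξ i * y.2 i := by
        simp [PiLp.inner_apply, RCLike.inner_apply, conj_trivial, mul_comm]
      rw [hinner]
      calc |∑ i, ξ i * y.2 i| ≤ ∑ i, |ξ i * y.2 i| := Finset.abs_sum_le_sum_abs _ _
        _ ≤ ∑ i : Fin d, δc := by
            refine Finset.sum_le_sum fun i _ => ?_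
            rw [abs_mul]
            calc |ξ i| * |y.2 i| ≤ lam i * σv i := by
                  exact mul_le_mul (hξi i).le (hy2i i).le (abs_nonneg _) (hlam i).le
              _ = δc := by
                  rw [hσv]
                  dsimp only
                  rw [mul_comm, div_mul_cancel₀ _ (hlam i).ne']
        _ = (d:ℝ) * δc := by
            rw [Finset.sum_const, Finset.card_univ, Fintype.card_fin, nsmul_eq_mul]
        _ ≤ 1/8 := by
            rw [hδc]
            have heq : (d:ℝ) * (1 / (8 * (d:ℝ)^3)) = 1 / (8 * (d:ℝ)^2) := by
              field_simp
            rw [heq]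
            refine one_div_le_one_div_of_le (by norm_num) ?_
            nlinarith
    calc |ph y ξ| ≤ |y.1 * g ξ| + |(inner ℝ ξ y.2 : ℝ)| := abs_add_le _ _
      _ ≤ 1/4 + 1/8 := add_le_add ht hx
      _ = 3/8 := by norm_num
  have hcos : ∀ y ∈ F, ∀ ξ ∈ E, (7:ℝ)/8 ≤ Real.cos (ph y ξ) := by
    intro y hy ξ hξ
    have h1 := hphase y hy ξ hξ
    have h2 := Real.one_sub_sq_div_two_le_cos (x := ph y ξ)
    have h3 : (ph y ξ)^2 ≤ (3/8)^2 := by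
      rw [← sq_abs]
      exact pow_le_pow_left₀ (abs_nonneg _) h1 2
    nlinarith
  -- continuity infrastructure
  have hvolE_lt : volume E < ⊤ := by rw [hvolE]; exact ENNReal.ofReal_lt_top
  have hvolF_lt : volume F < ⊤ := by rw [hvolF]; exact ENNReal.ofReal_lt_top
  have hgE : ContinuousOn g E := (hg.smooth.continuousOn).mono hsub
  have hphc : ∀ y : ℝ × Euc d, ContinuousOn (fun ξ => ph y ξ) E := by
    intro y
    exact (continuousOn_const.mul hgE).add
      ((Continuous.inner continuous_id continuous_const).continuousOn)
  have hexpc : ∀ y : ℝ × Euc d,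
      ContinuousOn (fun ξ => Complex.exp (Complex.I * ((ph y ξ : ℝ) : ℂ))) E := by
    intro y
    exact Complex.continuous_exp.comp_continuousOn
      (continuousOn_const.mul (Complex.continuous_ofReal.comp_continuousOn (hphc y)))
  have hnorm1 : ∀ (r : ℝ), ‖Complex.exp (Complex.I * (r : ℂ))‖ = 1 := by
    intro r; rw [mul_comm, Complex.norm_exp_ofReal_mul_I]
  have hintE : ∀ y : ℝ × Euc d,
      IntegrableOn (fun ξ => Complex.exp (Complex.I * ((ph y ξ : ℝ) : ℂ))) E volume := by
    intro y
    refine Integrable.mono' (g := fun _ => (1:ℝ))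
      (integrableOn_const hvolE_lt.ne) ((hexpc y).aestronglyMeasurable hmeasE) ?_
    filter_upwards with ξ
    rw [hnorm1]
  set ψ : ℝ × Euc d → ℂ := fun y => ∫ ξ in E, Complex.exp (Complex.I * ((ph y ξ : ℝ) : ℂ))
    with hψ
  have hψcont : Continuous ψ := by
    refine continuous_of_dominated (bound := fun _ => (1:ℝ))
      (fun y => (hexpc y).aestronglyMeasurable hmeasE) (fun y => ?_)
      (integrableOn_const hvolE_lt.ne) ?_
    · filter_upwards with ξ
      rw [hnorm1]
    · filter_upwards with ξ
      refine Complex.continuous_exp.comp (continuous_const.mul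
        (Complex.continuous_ofReal.comp ?_))
      exact (continuous_fst.mul continuous_const).add
        (Continuous.inner continuous_const continuous_snd)
  have hext : ∀ y, extOp d ℓ g fE y = ψ y := by
    intro y
    rw [extOp]
    have hfun : (fun ξ => Complex.exp (Complex.I * ((y.1 * g ξ + inner ℝ ξ y.2 : ℝ) : ℂ)) * fE ξ)
        = fun ξ => E.indicator (fun ξ => Complex.exp (Complex.I * ((ph y ξ : ℝ) : ℂ))) ξ := by
      funext ξ
      rw [hfE]
      by_cases hmem : ξ ∈ E
      · simp only [Set.indicator_of_mem hmem, mul_one, hph]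
      · simp only [Set.indicator_of_notMem hmem, mul_zero]
    rw [hfun, setIntegral_indicator hmeasE, Set.inter_eq_self_of_subset_right hsub]
  have hpairval : pairing d (extOp d ℓ g fE) gF = ∫ y in F, ψ y := by
    rw [pairing]
    have hfun : (fun y => extOp d ℓ g fE y * (starRingEnd ℂ) (gF y)) = F.indicator ψ := by
      funext y
      rw [hext y, hgF]
      by_cases hmem : y ∈ F
      · simp [Set.indicator_of_mem hmem]
      · simp [Set.indicator_of_notMem hmem]
    rw [hfun, integral_indicator hmeasF]
  have hψint : IntegrableOn ψ F volume := by
    refine Integrable.mono' (g := fun _ => (volume E).toReal)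
      (integrableOn_const hvolF_lt.ne) hψcont.aestronglyMeasurable.restrict ?_
    filter_upwards with y
    rw [hψ]
    have := norm_setIntegral_le_of_norm_le_const (C := 1) hvolE_lt
      (fun ξ _ => (hnorm1 (ph y ξ)).le)
    simpa [measureReal_def] using this
  have hre1 : ∀ y ∈ F, (7:ℝ)/8 * PE ≤ (ψ y).re := by
    intro y hy
    have hre_eq : (ψ y).re = ∫ ξ in E, Real.cos (ph y ξ) := by
      rw [hψ, ← RCLike.re_eq_complex_re, ← integral_re (hintE y)]
      refine integral_congr_ae (Filter.Eventually.of_forall fun ξ => ?_)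
      show (Complex.exp (Complex.I * ((ph y ξ : ℝ) : ℂ))).re = Real.cos (ph y ξ)
      rw [show Complex.I * ((ph y ξ : ℝ) : ℂ) = ((ph y ξ : ℝ) : ℂ) * Complex.I from
        mul_comm _ _, Complex.exp_ofReal_mul_I_re]
    have hccont : ContinuousOn (fun ξ => Real.cos (ph y ξ)) E :=
      Real.continuous_cos.comp_continuousOn (hphc y)
    have hcint : IntegrableOn (fun ξ => Real.cos (ph y ξ)) E := by
      refine Integrable.mono' (g := fun _ => (1:ℝ))
        (integrableOn_const hvolE_lt.ne) (hccont.aestronglyMeasurable hmeasE) ?_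
      filter_upwards with ξ
      rw [Real.norm_eq_abs]
      exact Real.abs_cos_le_one _
    rw [hre_eq]
    calc (7:ℝ)/8 * PE = ∫ _ in E, (7:ℝ)/8 ∂volume := by
          rw [setIntegral_const, measureReal_def, hvolE, ENNReal.toReal_ofReal hPEpos.le, smul_eq_mul]
          ring
      _ ≤ ∫ ξ in E, Real.cos (ph y ξ) :=
          setIntegral_mono_on (integrableOn_const hvolE_lt.ne) hcint hmeasE
            (fun ξ hξ => hcos y hy ξ hξ)
  have hre2 : (7:ℝ)/8 * (PE * PF) ≤ (∫ y in F, ψ y).re := by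
    rw [← RCLike.re_eq_complex_re, ← integral_re hψint]
    calc (7:ℝ)/8 * (PE * PF) = ∫ _ in F, (7:ℝ)/8 * PE ∂volume := by
          rw [setIntegral_const, measureReal_def, hvolF, ENNReal.toReal_ofReal hPFpos.le, smul_eq_mul]
          ring
      _ ≤ ∫ y in F, RCLike.re (ψ y) :=
          setIntegral_mono_on (integrableOn_const hvolF_lt.ne) hψint.re hmeasF
            (fun y hy => by rw [RCLike.re_eq_complex_re]; exact hre1 y hy)
  have hpair : (7:ℝ)/8 * (PE * PF) ≤ ‖pairing d (extOp d ℓ g fE) gF‖ := by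
    rw [hpairval]
    refine le_trans hre2 ?_
    exact Complex.re_le_norm _
  -- witnesses' remaining properties
  have hvolE_pos : 0 < volume E := by rw [hvolE]; exact ENNReal.ofReal_pos.2 hPEpos
  have hvolF_pos : 0 < volume F := by rw [hvolF]; exact ENNReal.ofReal_pos.2 hPFpos
  have hfEmeas : Measurable fE := measurable_const.indicator hmeasE
  have hfEbd : ∀ x, ‖fE x‖ ≤ E.indicator (fun _ => (1:ℝ)) x := by
    intro x
    rw [hfE]
    by_cases hmem : x ∈ E
    · simp [Set.indicator_of_mem hmem]
    · simp [Set.indicator_of_notMem hmem]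
  have hgFmeas : Measurable gF := measurable_const.indicator hmeasF
  have hgFbd : ∀ y, ‖gF y‖ ≤ F.indicator (fun _ => (1:ℝ)) y := by
    intro y
    rw [hgF]
    by_cases hmem : y ∈ F
    · simp [Set.indicator_of_mem hmem]
    · simp [Set.indicator_of_notMem hmem]
  -- real-side algebraic identity
  set k : ℝ := (d:ℝ) - j - θ with hk
  set Lf : ℝ := ∏ i ∈ Finset.univ.filter (fun i : Fin d => (i : ℕ) < j), (ℓ i).toReal with hLf
  have hLfpos : 0 < Lf :=
    Finset.prod_pos fun i _ => ENNReal.toReal_pos (hℓ i).1.ne' (hℓ i).2.ne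
  set L : ℝ := Lf * M ^ θ with hL
  have hLpos : 0 < L := mul_pos hLfpos (Real.rpow_pos_of_pos hMpos θ)
  have hprod : ∏ i, lam i = L * M ^ k := by
    have hsplit := (Finset.prod_filter_mul_prod_filter_not Finset.univ
      (fun i : Fin d => (i : ℕ) < j) lam).symm
    have h1 : ∏ i ∈ Finset.univ.filter (fun i : Fin d => (i : ℕ) < j), lam i = Lf := by
      rw [hLf]
      refine Finset.prod_congr rfl fun i hi => ?_
      rw [hlam_def]
      simp only [Finset.mem_filter] at hi
      exact if_pos hi.2
    have h2 : ∏ i ∈ Finset.univ.filter (fun i : Fin d => ¬ (i : ℕ) < j), lam i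
        = M ^ (d - j : ℕ) := by
      have hcongr : ∏ i ∈ Finset.univ.filter (fun i : Fin d => ¬ (i : ℕ) < j), lam i
          = ∏ _i ∈ Finset.univ.filter (fun i : Fin d => ¬ (i : ℕ) < j), M := by
        refine Finset.prod_congr rfl fun i hi => ?_
        rw [hlam_def]
        simp only [Finset.mem_filter] at hi
        exact if_neg hi.2
      rw [hcongr, Finset.prod_const]
      congr 1
      have hcard := Finset.card_filter_add_card_filter_not
        (s := (Finset.univ : Finset (Fin d))) (p := fun i : Fin d => (i : ℕ) < j)
      rw [card_filter_lt d j hj.le, Finset.card_univ, Fintype.card_fin] at hcard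
      omega
    have hMk : M ^ (d - j : ℕ) = M ^ (θ + k) := by
      rw [← Real.rpow_natCast M (d - j)]
      congr 1
      rw [Nat.cast_sub hj.le, hk]
      ring
    rw [hsplit, h1, h2, hMk, hL, Real.rpow_add hMpos]
    ring
  have hPEeq : PE = 2 ^ d * (L * M ^ k) := by
    rw [hPE, Finset.prod_mul_distrib, Finset.prod_const, Finset.card_univ, Fintype.card_fin,
      hprod]
  have hM2 : M ^ (2:ℝ) = M ^ 2 := by
    rw [show (2:ℝ) = ((2:ℕ):ℝ) by norm_num, Real.rpow_natCast]
  have hPFeq : PF = (2 * δc) ^ (d + 1) / (M ^ (2:ℝ) * (L * M ^ k)) := by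
    rw [hPF, hM2, ← hprod]
    have h3 : ∏ i, (2 * σv i) = (2 * δc) ^ d / ∏ i, lam i := by
      have : ∀ i : Fin d, 2 * σv i = (2 * δc) / lam i := by
        intro i
        rw [hσv]
        dsimp only
        ring
      rw [Finset.prod_congr rfl fun i _ => this i, Finset.prod_div_distrib,
        Finset.prod_const, Finset.card_univ, Fintype.card_fin]
    rw [h3, hτ]
    have hprodpos : 0 < ∏ i, lam i := Finset.prod_pos fun i _ => hlam i
    field_simp
    ring
  have hkey := key_alg L M ((2 * δc) ^ (d + 1)) a b k ((2:ℝ) ^ d) hLpos hMpos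
    (by positivity) (by positivity) hid
  -- the final quotient bound
  set ra : ℝ := (1 / p).toReal with hra
  have hreal : C₀ * L ^ (a - b) = (7/8 * (PE * PF)) / (PE ^ ra * PF ^ (1 - b)) := by
    have h1 : PE ^ a * PE ^ ra = PE := by
      rw [← Real.rpow_add hPEpos, show a + ra = 1 by rw [haconj, hra]; ring, Real.rpow_one]
    have h2 : PF ^ b * PF ^ (1 - b) = PF := by
      rw [← Real.rpow_add hPFpos, show b + (1 - b) = 1 by ring, Real.rpow_one]
    have h3 : (7/8 * PE ^ a * PF ^ b) * (PE ^ ra * PF ^ (1 - b)) = 7/8 * (PE * PF) := by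
      calc (7/8 * PE ^ a * PF ^ b) * (PE ^ ra * PF ^ (1 - b))
          = 7/8 * ((PE ^ a * PE ^ ra) * (PF ^ b * PF ^ (1 - b))) := by ring
        _ = 7/8 * (PE * PF) := by rw [h1, h2]
    have hden : PE ^ ra * PF ^ (1 - b) ≠ 0 := by positivity
    rw [← h3, mul_div_assoc, div_self hden, mul_one]
    calc C₀ * L ^ (a - b)
        = 7/8 * ((((2:ℝ) ^ d) ^ a * (((2 * δc) ^ (d + 1)) ^ b)) * L ^ (a - b)) := by
          rw [hC₀]; ring
      _ = 7/8 * (((2:ℝ) ^ d * (L * M ^ k)) ^ a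
          * (((2 * δc) ^ (d + 1)) / (M ^ (2:ℝ) * (L * M ^ k))) ^ b) := by rw [hkey]
      _ = 7/8 * PE ^ a * PF ^ b := by rw [← hPEeq, ← hPFeq]; ring
  have hLHS : ENNReal.ofReal C₀ * (sidep d ℓ j * ℓ ⟨j, hj⟩ ^ θ) ^ (a - b)
      = ENNReal.ofReal (C₀ * L ^ (a - b)) := by
    have hside : sidep d ℓ j * ℓ ⟨j, hj⟩ ^ θ = ENNReal.ofReal L := by
      rw [sidep]
      have h4 : ∏ i ∈ Finset.univ.filter (fun i : Fin d => (i : ℕ) < j), ℓ i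
          = ENNReal.ofReal Lf := by
        rw [hLf, ENNReal.ofReal_prod_of_nonneg fun i _ => ENNReal.toReal_nonneg]
        exact Finset.prod_congr rfl fun i _ => (ENNReal.ofReal_toReal (hℓ i).2.ne).symm
      have h5 : ℓ ⟨j, hj⟩ ^ θ = ENNReal.ofReal (M ^ θ) := by
        rw [show ℓ ⟨j, hj⟩ = ENNReal.ofReal M from (ENNReal.ofReal_toReal (hℓ _).2.ne).symm,
          ENNReal.ofReal_rpow_of_pos hMpos]
      rw [h4, h5, ← ENNReal.ofReal_mul hLfpos.le, hL]
    rw [hside, ENNReal.ofReal_rpow_of_pos hLpos, ← ENNReal.ofReal_mul hC₀pos.le]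
  have hfinal : ENNReal.ofReal C₀ * (sidep d ℓ j * ℓ ⟨j, hj⟩ ^ θ) ^ (a - b)
      ≤ ENNReal.ofReal ‖pairing d (extOp d ℓ g fE) gF‖ /
        (volume E ^ ra * volume F ^ (1 - b)) := by
    rw [hLHS, hreal, hvolE, hvolF, ENNReal.ofReal_rpow_of_pos hPEpos,
      ENNReal.ofReal_rpow_of_pos hPFpos,
      ← ENNReal.ofReal_mul (by positivity), ENNReal.ofReal_div_of_pos (by positivity)]
    refine ENNReal.div_le_div_right (ENNReal.ofReal_le_ofReal ?_) _
    exact hpair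
  refine le_trans hfinal ?_
  rw [rwtNorm, rwtNormOp]
  exact le_iSup_of_le E (le_iSup_of_le F (le_iSup_of_le fE (le_iSup_of_le gF
    (le_iSup_of_le hmeasE (le_iSup_of_le hsub (le_iSup_of_le hvolE_pos
    (le_iSup_of_le hvolE_lt (le_iSup_of_le hmeasF (le_iSup_of_le hvolF_pos
    (le_iSup_of_le hvolF_lt (le_iSup_of_le hfEmeas (le_iSup_of_le hfEbd
    (le_iSup_of_le hgFmeas (le_iSup_of_le hgFbd (le_refl _)))))))))))))))
end
end

section
/- Let d ≥ 1, q > 4, and p ≥ (q/3)' (the Hölder conjugate of q/3). Then there is c = c(d,p,q) > 0 such that for every integer N ≥ 2, every 0 < ε₀ < 1, every ℓ ∈ (0,∞)^d with l₁ ≤ ⋯ ≤ l_d, and every g elliptic over Q^ℓ with parameters (N, ε₀): ‖E^ℓ_g‖^{RWT}_{L^p→L^q} ≥ c·(l₁⋯l_{d−1})^{1/p' − 1/q}·l_d^{1 − 3/q − 1/p}. -/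
set_option maxHeartbeats 1000000
set_option synthInstance.maxHeartbeats 400000


open MeasureTheory ENNReal Filter
open scoped RealInnerProductSpace
noncomputable section

/-! ### Auxiliary lemmas -/

set_option maxHeartbeats 1000000 in
set_option synthInstance.maxHeartbeats 400000 in
lemma half_le_cos {x : ℝ} (hx : |x| ≤ 1) : 1/2 ≤ Real.cos x := by
  rw [← Real.cos_abs]
  have h3 : (3:ℝ) ≤ Real.pi := Real.pi_gt_three.le
  have h1 : Real.cos 1 ≤ Real.cos |x| :=
    Real.cos_le_cos_of_nonneg_of_le_pi (abs_nonneg x) (by linarith) hx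
  have h2 : Real.cos (Real.pi/3) ≤ Real.cos 1 :=
    Real.cos_le_cos_of_nonneg_of_le_pi (by norm_num) (by linarith [Real.pi_pos]) (by linarith)
  rw [Real.cos_pi_div_three] at h2
  linarith

lemma rpow_identity (W K u v a b : ℝ) (hW : 0 < W) (hK : 0 < K) (hu : 0 < u) (hv : 0 < v) :
    (1/2 * W^(1-a) * K^b) * u^(1-a-b) * v^(1-3*b-a) *
      ((W*(u*v))^a * (K * u⁻¹ * (v*v*v)⁻¹)^(1-b))
      = 1/2 * (W*(u*v)) * (K * u⁻¹ * (v*v*v)⁻¹) := by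
  obtain ⟨w, rfl⟩ : ∃ w, W = Real.exp w := ⟨Real.log W, (Real.exp_log hW).symm⟩
  obtain ⟨k, rfl⟩ : ∃ k, K = Real.exp k := ⟨Real.log K, (Real.exp_log hK).symm⟩
  obtain ⟨x, rfl⟩ : ∃ x, u = Real.exp x := ⟨Real.log u, (Real.exp_log hu).symm⟩
  obtain ⟨y, rfl⟩ : ∃ y, v = Real.exp y := ⟨Real.log v, (Real.exp_log hv).symm⟩
  simp only [← Real.exp_add, ← Real.exp_neg, ← Real.exp_mul]
  rw [mul_comm (1/2 : ℝ) (Real.exp _), mul_comm (1/2 : ℝ) (Real.exp _), mul_assoc, mul_assoc,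
    mul_assoc]
  simp only [← Real.exp_add]
  rw [mul_right_comm (Real.exp _) (1/2 : ℝ) (Real.exp _), ← Real.exp_add,
    mul_right_comm (Real.exp _) (1/2 : ℝ) (Real.exp _), ← Real.exp_add]
  congr 2
  ring

lemma abs_apply_le_norm (d : ℕ) (u : Euc d) (i : Fin d) : |u i| ≤ ‖u‖ := by
  have h1 : ⟪stdb d i, u⟫ = u i := by
    simpa [stdb] using EuclideanSpace.inner_single_left (𝕜 := ℝ) i 1 u
  have h2 := abs_real_inner_le_norm (stdb d i) u
  rw [h1] at h2
  simpa [stdb, EuclideanSpace.norm_single] using h2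

lemma sum_abs_le (d : ℕ) (u : Euc d) : ∑ i, |u i| ≤ d * ‖u‖ := by
  calc ∑ i, |u i| ≤ ∑ _i : Fin d, ‖u‖ := Finset.sum_le_sum fun i _ => abs_apply_le_norm d u i
  _ = d * ‖u‖ := by simp [mul_comm]

lemma decomp (d : ℕ) (u : Euc d) : u = ∑ i, u i • stdb d i := by
  have := (EuclideanSpace.basisFun (Fin d) ℝ).sum_repr u
  simp only [EuclideanSpace.basisFun_repr, EuclideanSpace.basisFun_apply] at this
  exact this.symm

lemma bilin_norm_le (d : ℕ) (B : Euc d →L[ℝ] Euc d →L[ℝ] ℝ) (K : ℝ) (hK : 0 ≤ K)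
    (h : ∀ i j, |B (stdb d i) (stdb d j)| ≤ K) : ‖B‖ ≤ (d:ℝ)^2 * K := by
  apply ContinuousLinearMap.opNorm_le_bound _ (by positivity)
  intro u
  rw [mul_assoc]
  apply ContinuousLinearMap.opNorm_le_bound _ (by positivity)
  intro v
  have key : B u v = ∑ i, ∑ j, (u i * v j) * (B (stdb d i) (stdb d j)) := by
    conv_lhs => rw [decomp d u, decomp d v]
    simp only [map_sum, ContinuousLinearMap.sum_apply]
    rw [Finset.sum_comm]
    refine Finset.sum_congr rfl fun i _ => Finset.sum_congr rfl fun j _ => ?_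
    rw [B.map_smul, ContinuousLinearMap.smul_apply, (B (stdb d i)).map_smul,
      smul_eq_mul, smul_eq_mul]
    ring
  rw [Real.norm_eq_abs, key]
  calc |∑ i, ∑ j, (u i * v j) * (B (stdb d i) (stdb d j))|
      ≤ ∑ i, ∑ j, |u i| * |v j| * K := by
        refine (Finset.abs_sum_le_sum_abs _ _).trans (Finset.sum_le_sum fun i _ => ?_)
        refine (Finset.abs_sum_le_sum_abs _ _).trans (Finset.sum_le_sum fun j _ => ?_)
        rw [abs_mul, abs_mul]
        exact mul_le_mul_of_nonneg_left (h i j) (by positivity)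
    _ = (∑ i, |u i|) * (∑ j, |v j|) * K := by
        rw [Finset.sum_mul_sum, Finset.sum_mul]
        exact Finset.sum_congr rfl fun i _ => by rw [Finset.sum_mul]
    _ ≤ (d * ‖u‖) * (d * ‖v‖) * K := by
        refine mul_le_mul_of_nonneg_right (mul_le_mul (sum_abs_le d u) (sum_abs_le d v) ?_ ?_) hK
        · positivity
        · positivity
    _ = (d:ℝ)^2 * (K * ‖u‖) * ‖v‖ := by ring

def Rbox (d : ℕ) (r : Fin d → ℝ) : Set (Euc d) := {ξ | ∀ i, |ξ i| < r i}

lemma Qset_eq_Rbox (d : ℕ) (ℓ : Fin d → ℝ≥0∞) (hfin : ∀ i, ℓ i ≠ ⊤) :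
    Qset d ℓ = Rbox d (fun i => (ℓ i).toReal) := by
  ext ξ
  exact forall_congr' fun i => ENNReal.ofReal_lt_iff_lt_toReal (abs_nonneg _) (hfin i)

lemma Rbox_eq_preimage (d : ℕ) (r : Fin d → ℝ) :
    Rbox d r = (MeasurableEquiv.toLp 2 (Fin d → ℝ)).symm ⁻¹'
      (Set.univ.pi fun i => Set.Ioo (-(r i)) (r i)) := by
  ext ξ
  simp [Rbox, Set.mem_pi, abs_lt, MeasurableEquiv.coe_toLp_symm, and_comm]

lemma isOpen_Rbox (d : ℕ) (r : Fin d → ℝ) : IsOpen (Rbox d r) := by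
  have : Rbox d r = ⋂ i, (fun ξ : Euc d => ξ i) ⁻¹' (Set.Ioo (-(r i)) (r i)) := by
    ext ξ; simp [Rbox, abs_lt, and_comm]
  rw [this]
  exact isOpen_iInter_of_finite fun i =>
    (isOpen_Ioo).preimage (EuclideanSpace.proj (𝕜 := ℝ) i).continuous

lemma measurableSet_Rbox (d : ℕ) (r : Fin d → ℝ) : MeasurableSet (Rbox d r) :=
  (isOpen_Rbox d r).measurableSet

lemma convex_Rbox (d : ℕ) (r : Fin d → ℝ) : Convex ℝ (Rbox d r) := by
  intro x hx y hy a b ha hb hab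
  intro i
  have hxy : (a • x + b • y) i = a * x i + b * y i := rfl
  rw [hxy]
  have h1 : |a * x i + b * y i| ≤ a * |x i| + b * |y i| := by
    refine (abs_add_le _ _).trans ?_
    rw [abs_mul, abs_mul, abs_of_nonneg ha, abs_of_nonneg hb]
  rcases eq_or_lt_of_le ha with h0 | h0
  · have hb1 : b = 1 := by linarith
    have := hy i
    rw [← h0] at h1 hab ⊢
    simp only [zero_mul, zero_add] at h1 ⊢
    rw [hb1] at h1 ⊢
    simpa using h1.trans_lt (by simpa using this)
  · have h2 : a * |x i| < a * r i := mul_lt_mul_of_pos_left (hx i) h0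
    have h3 : b * |y i| ≤ b * r i := mul_le_mul_of_nonneg_left (le_of_lt (hy i)) hb
    have h4 : a * r i + b * r i = r i := by rw [← add_mul, hab, one_mul]
    linarith

lemma volume_Rbox (d : ℕ) (r : Fin d → ℝ) :
    volume (Rbox d r) = ∏ i, ENNReal.ofReal (2 * r i) := by
  rw [Rbox_eq_preimage]
  rw [(EuclideanSpace.volume_preserving_symm_measurableEquiv_toLp (Fin d)).measure_preimage
    ((MeasurableSet.univ_pi fun i => measurableSet_Ioo).nullMeasurableSet)]
  rw [volume_pi_pi]
  refine Finset.prod_congr rfl fun i _ => ?_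
  rw [Real.volume_Ioo]
  ring_nf

section main
variable {d N : ℕ} {ε₀ : ℝ} {ℓ : Fin d → ℝ≥0∞} {g : Euc d → ℝ}

/-- entrywise Hessian bound for the perturbation -/
lemma hess_entry_bound (hℓ : ∀ i, 0 < ℓ i ∧ ℓ i < ⊤) (hg : IsElliptic d ℓ g N ε₀)
    (η : Euc d) (hη : η ∈ Qset d ℓ) (i j : Fin d) :
    |d2 d (pert d g) η i j| < ε₀ := by
  set r : Fin d → ℝ := fun i => (ℓ i).toReal with hr
  have hrpos : ∀ i, 0 < r i := fun i => ENNReal.toReal_pos (hℓ i).1.ne' (hℓ i).2.ne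
  have hsub : Qset d (fun i => ENNReal.ofReal (r i)) ⊆ Qset d ℓ := by
    have : (fun i => ENNReal.ofReal (r i)) = ℓ := by
      funext i; exact ENNReal.ofReal_toReal (hℓ i).2.ne
    rw [this]
  have hηmem : η ∈ Qset d ℓ := hη
  rw [Qset_eq_Rbox d ℓ (fun i => (hℓ i).2.ne)] at hηmem
  set ξ : Euc d := WithLp.toLp 2 (fun i => η i / r i : Fin d → ℝ) with hξ
  have hξmem : ξ ∈ Qset d (fun _ => 1) := by
    intro i
    have : |η i / r i| < 1 := by
      rw [abs_div, abs_of_pos (hrpos i), div_lt_one (hrpos i)]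
      exact hηmem i
    calc ENNReal.ofReal |ξ i| < ENNReal.ofReal 1 :=
          ENNReal.ofReal_lt_ofReal_iff one_pos |>.mpr this
      _ = 1 := ENNReal.ofReal_one
  have hkey := hg.bound r hrpos hsub 0 (Nat.zero_le N) i j Fin.elim0 ξ hξmem
  rw [iteratedFDeriv_zero_apply] at hkey
  have hscale : scaleMap d r ξ = η := by
    ext k
    show r k * (η k / r k) = η k
    rw [mul_comm, div_mul_cancel₀ _ (hrpos k).ne']
  rwa [hscale] at hkey

/-- second derivative of g has entries bounded by 3, given ε₀ ≤ 1 -/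
lemma hess_g_bound (hℓ : ∀ i, 0 < ℓ i ∧ ℓ i < ⊤) (hg : IsElliptic d ℓ g N ε₀)
    (hε : ε₀ ≤ 1) (x : Euc d) (hx : x ∈ Qset d ℓ) :
    ‖fderiv ℝ (fderiv ℝ g) x‖ ≤ 3 * (d:ℝ)^2 := by
  have hfin : ∀ i, ℓ i ≠ ⊤ := fun i => (hℓ i).2.ne
  have hQopen : IsOpen (Qset d ℓ) := by
    rw [Qset_eq_Rbox d ℓ hfin]; exact isOpen_Rbox _ _
  have hgat : ∀ y ∈ Qset d ℓ, ContDiffAt ℝ (N + 2 : ℕ) g y := fun y hy =>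
    hg.smooth.contDiffAt (hQopen.mem_nhds hy)
  have hpat : ∀ y ∈ Qset d ℓ, ContDiffAt ℝ 2 (pert d g) y := by
    intro y hy
    have h1 : ContDiffAt ℝ 2 g y := (hgat y hy).of_le (by exact_mod_cast le_add_self)
    exact h1.sub ((contDiff_norm_sq ℝ (n := 2)).contDiffAt)
  set c2 : Euc d →L[ℝ] Euc d →L[ℝ] ℝ := (2:ℝ) • innerSL ℝ with hc2
  have hqd : ∀ y : Euc d, fderiv ℝ (fun ξ : Euc d => ‖ξ‖ ^ 2) y = c2 y := by
    intro y
    rw [(hasStrictFDerivAt_norm_sq y).hasFDerivAt.fderiv]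
    ext v
    simp [hc2, two_smul, two_mul, innerSL_apply_apply]
    rfl
  -- fderiv g = fderiv pert + c2 on Qset
  have hfd : ∀ y ∈ Qset d ℓ, fderiv ℝ g y = fderiv ℝ (pert d g) y + c2 y := by
    intro y hy
    have hdp : DifferentiableAt ℝ (pert d g) y :=
      (hpat y hy).differentiableAt (by norm_num)
    have hdq : DifferentiableAt ℝ (fun ξ : Euc d => ‖ξ‖ ^ 2) y :=
      ((hasStrictFDerivAt_norm_sq y).hasFDerivAt).differentiableAt
    have hgsplit : g = fun ξ => pert d g ξ + ‖ξ‖ ^ 2 := by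
      funext ξ; simp [pert]
    have e1 : fderiv ℝ g y = fderiv ℝ (fun ξ => pert d g ξ + ‖ξ‖ ^ 2) y := by
      rw [← hgsplit]
    rw [e1, fderiv_fun_add hdp hdq, hqd y]
  have heq : (fun y => fderiv ℝ g y) =ᶠ[nhds x]
      fun y => fderiv ℝ (pert d g) y + c2 y :=
    Filter.eventuallyEq_of_mem (hQopen.mem_nhds hx) (fun y hy => hfd y hy)
  have hdp2 : DifferentiableAt ℝ (fun y => fderiv ℝ (pert d g) y) x := by
    have := (hpat x hx).fderiv_right (m := 1) (by norm_num)
    exact this.differentiableAt one_ne_zero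
  set A := fderiv ℝ (fun y => fderiv ℝ (pert d g) y) x with hA
  have hstep : fderiv ℝ (fderiv ℝ g) x = A + c2 := by
    rw [heq.fderiv_eq, fderiv_fun_add hdp2 c2.differentiableAt, ContinuousLinearMap.fderiv]
  refine (bilin_norm_le d _ 3 (by norm_num) ?_).trans_eq (by ring)
  intro i j
  rw [hstep, ContinuousLinearMap.add_apply, ContinuousLinearMap.add_apply]
  have hpert_entry : A (stdb d i) (stdb d j) = d2 d (pert d g) x i j := by
    rw [hA, d2, iteratedFDeriv_two_apply]
    simp
  have h2 : |c2 (stdb d i) (stdb d j)| ≤ 2 := by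
    have e1 : c2 (stdb d i) (stdb d j) = 2 * ⟪stdb d i, stdb d j⟫ := by
      rw [hc2, ContinuousLinearMap.smul_apply, ContinuousLinearMap.smul_apply,
        smul_eq_mul, innerSL_apply_apply]
    rw [e1, abs_mul, abs_two]
    have h3 := abs_real_inner_le_norm (stdb d i) (stdb d j)
    have hni : ‖stdb d i‖ = 1 := by simp [stdb, EuclideanSpace.norm_single]
    have hnj : ‖stdb d j‖ = 1 := by simp [stdb, EuclideanSpace.norm_single]
    rw [hni, hnj] at h3
    nlinarith [abs_nonneg (⟪stdb d i, stdb d j⟫)]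
  have h1 : |d2 d (pert d g) x i j| < ε₀ := hess_entry_bound hℓ hg x hx i j
  calc |A (stdb d i) (stdb d j) + c2 (stdb d i) (stdb d j)|
      ≤ |A (stdb d i) (stdb d j)| + |c2 (stdb d i) (stdb d j)| := abs_add_le _ _
    _ ≤ 3 := by rw [hpert_entry]; linarith

lemma norm_le_of_mem_Rbox {r : Fin d → ℝ} {x : Euc d} (hx : ∀ i, |x i| < r i)
    {L : ℝ} (hrL : ∀ i, r i ≤ L) : ‖x‖ ≤ d * L := by
  have hdecomp : x = ∑ i, x i • stdb d i := decomp d x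
  calc ‖x‖ = ‖∑ i, x i • stdb d i‖ := by rw [← hdecomp]
    _ ≤ ∑ i, ‖x i • stdb d i‖ := norm_sum_le _ _
    _ = ∑ i, |x i| := by
        refine Finset.sum_congr rfl fun i _ => ?_
        rw [norm_smul, Real.norm_eq_abs]
        simp [stdb, EuclideanSpace.norm_single]
    _ ≤ ∑ _i : Fin d, L := Finset.sum_le_sum fun i _ => ((hx i).le.trans (hrL i))
    _ = d * L := by simp [mul_comm]

lemma fderiv_g_split (hℓ : ∀ i, 0 < ℓ i ∧ ℓ i < ⊤) (hg : IsElliptic d ℓ g N ε₀)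
    (y : Euc d) (hy : y ∈ Qset d ℓ) :
    fderiv ℝ g y = fderiv ℝ (pert d g) y + (2:ℝ) • innerSL ℝ y := by
  have hfin : ∀ i, ℓ i ≠ ⊤ := fun i => (hℓ i).2.ne
  have hQopen : IsOpen (Qset d ℓ) := by
    rw [Qset_eq_Rbox d ℓ hfin]; exact isOpen_Rbox _ _
  have hdp : DifferentiableAt ℝ (pert d g) y := by
    have h1 : ContDiffAt ℝ 2 g y :=
      (hg.smooth.contDiffAt (hQopen.mem_nhds hy)).of_le (by exact_mod_cast le_add_self)
    exact (h1.sub ((contDiff_norm_sq ℝ (n := 2)).contDiffAt)).differentiableAt (by norm_num)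
  have hdq : DifferentiableAt ℝ (fun ξ : Euc d => ‖ξ‖ ^ 2) y :=
    ((hasStrictFDerivAt_norm_sq y).hasFDerivAt).differentiableAt
  have hgsplit : g = fun ξ => pert d g ξ + ‖ξ‖ ^ 2 := by funext ξ; simp [pert]
  have e1 : fderiv ℝ g y = fderiv ℝ (fun ξ => pert d g ξ + ‖ξ‖ ^ 2) y := by rw [← hgsplit]
  rw [e1, fderiv_fun_add hdp hdq, (hasStrictFDerivAt_norm_sq y).hasFDerivAt.fderiv]
  congr 1
  ext v
  simp [two_smul, two_mul]

lemma zero_mem_Qset (hℓ : ∀ i, 0 < ℓ i ∧ ℓ i < ⊤) : (0 : Euc d) ∈ Qset d ℓ := by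
  intro i
  show ENNReal.ofReal |(0 : Euc d) i| < ℓ i
  have : (0 : Euc d) i = 0 := rfl
  rw [this]
  simpa using (hℓ i).1

lemma g_val_bound (hd : 1 ≤ d) (hℓ : ∀ i, 0 < ℓ i ∧ ℓ i < ⊤) (hmono : Monotone ℓ)
    (hg : IsElliptic d ℓ g N ε₀) (hε : ε₀ ≤ 1) (ξ : Euc d) (hξ : ξ ∈ Qset d ℓ) :
    |g ξ| ≤ 3 * (d:ℝ)^4 * (ℓ ⟨d-1, Nat.sub_lt hd one_pos⟩).toReal ^ 2 := by
  have hfin : ∀ i, ℓ i ≠ ⊤ := fun i => (hℓ i).2.ne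
  set L : ℝ := (ℓ ⟨d-1, by omega⟩).toReal with hL
  have hLpos : 0 < L := ENNReal.toReal_pos (hℓ _).1.ne' (hℓ _).2.ne
  have hrL : ∀ i, (ℓ i).toReal ≤ L := by
    intro i
    refine ENNReal.toReal_mono (hℓ _).2.ne (hmono ?_)
    exact Fin.le_def.mpr (Nat.le_pred_of_lt i.isLt)
  have hQR : Qset d ℓ = Rbox d (fun i => (ℓ i).toReal) := Qset_eq_Rbox d ℓ hfin
  have hQopen : IsOpen (Qset d ℓ) := by rw [hQR]; exact isOpen_Rbox _ _
  have hQconv : Convex ℝ (Qset d ℓ) := by rw [hQR]; exact convex_Rbox _ _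
  have hnorm : ∀ x ∈ Qset d ℓ, ‖x‖ ≤ d * L := by
    intro x hx
    rw [hQR] at hx
    exact norm_le_of_mem_Rbox hx hrL
  have h0 : (0 : Euc d) ∈ Qset d ℓ := zero_mem_Qset hℓ
  have hg0 : g 0 = 0 := by
    have := hg.zero
    simpa [pert] using this
  have hfd0 : fderiv ℝ g 0 = 0 := by
    rw [fderiv_g_split hℓ hg 0 h0, hg.grad_zero]
    simp
  have hCD2 : ∀ x ∈ Qset d ℓ, ContDiffAt ℝ 2 g x := fun x hx =>
    (hg.smooth.contDiffAt (hQopen.mem_nhds hx)).of_le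
      (by exact_mod_cast le_add_self : (2 : WithTop ℕ∞) ≤ (N : WithTop ℕ∞) + 2)
  have hdiff : ∀ x ∈ Qset d ℓ, DifferentiableAt ℝ g x := fun x hx =>
    (hCD2 x hx).differentiableAt (by norm_num)
  have hdiff' : ∀ x ∈ Qset d ℓ, DifferentiableAt ℝ (fun y => fderiv ℝ g y) x := by
    intro x hx
    have := (hg.smooth.contDiffAt (hQopen.mem_nhds hx)).fderiv_right (m := 1)
      (by exact_mod_cast le_add_self : (1 : WithTop ℕ∞) + 1 ≤ (N : WithTop ℕ∞) + 2)
    exact this.differentiableAt one_ne_zero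
  have hgrad : ∀ x ∈ Qset d ℓ, ‖fderiv ℝ g x‖ ≤ 3 * (d:ℝ)^2 * (d * L) := by
    intro x hx
    have := Convex.norm_image_sub_le_of_norm_fderiv_le hdiff'
      (fun y hy => hess_g_bound hℓ hg hε y hy) hQconv h0 hx
    rw [hfd0, sub_zero, sub_zero] at this
    exact this.trans (mul_le_mul_of_nonneg_left (hnorm x hx) (by positivity))
  have hval := Convex.norm_image_sub_le_of_norm_fderiv_le hdiff hgrad hQconv h0 hξ
  rw [hg0, sub_zero, sub_zero, Real.norm_eq_abs] at hval
  calc |g ξ| ≤ 3 * (d:ℝ)^2 * (d * L) * ‖ξ‖ := hval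
    _ ≤ 3 * (d:ℝ)^2 * (d * L) * (d * L) := by
        refine mul_le_mul_of_nonneg_left (hnorm ξ hξ) (by positivity)
    _ = 3 * (d:ℝ)^4 * L^2 := by ring

end main

section mainthm
open Set

/-- lower bound in the region `q > 4`, `p ≥ (q/3)'`. -/
theorem statement12 (d : ℕ) (hd : 1 ≤ d) (p q : ℝ≥0∞) (hq : 4 < q)
    (hp : hconj (q / 3) ≤ p) :
    ∃ c : ℝ≥0∞, 0 < c ∧
      ∀ N : ℕ, 2 ≤ N → ∀ ε₀ : ℝ, 0 < ε₀ → ε₀ < 1 →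
        ∀ ℓ : Fin d → ℝ≥0∞, (∀ i, 0 < ℓ i ∧ ℓ i < ⊤) → Monotone ℓ →
          ∀ g : Euc d → ℝ, IsElliptic d ℓ g N ε₀ →
            c * sidep d ℓ (d - 1) ^ ((1 / hconj p).toReal - (1 / q).toReal) *
                ℓ ⟨d - 1, by omega⟩ ^ (1 - 3 * (1 / q).toReal - (1 / p).toReal) ≤
              rwtNorm d ℓ g p q := by
  classical
  set a : ℝ := (1/p).toReal with ha_def
  set b : ℝ := (1/q).toReal with hb_def
  have hd0 : (0:ℝ) < (d:ℝ) := by exact_mod_cast hd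
  set W : ℝ := 2^d with hW_def
  set K : ℝ := 1/(3 * (d:ℝ)^4 * (d:ℝ)^d) with hK_def
  have hWpos : 0 < W := by rw [hW_def]; positivity
  have hKpos : 0 < K := by rw [hK_def]; positivity
  refine ⟨ENNReal.ofReal (1/2 * W^(1-a) * K^b), ENNReal.ofReal_pos.mpr (by positivity), ?_⟩
  intro N hN ε₀ hε₀pos hε₀lt ℓ hℓ hmono g hg
  -- ==================== exponent arithmetic ====================
  have hq0 : q ≠ 0 := by
    intro h; rw [h] at hq; simp at hq
  have hp1 : (1:ℝ≥0∞) ≤ p := by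
    refine le_trans ?_ hp
    rw [hconj]
    exact ENNReal.one_le_inv.mpr tsub_le_self
  have h1p_le : 1/p ≤ (1 : ℝ≥0∞) := by
    rw [one_div]; exact ENNReal.inv_le_one.mpr hp1
  have ha0 : 0 ≤ a := ENNReal.toReal_nonneg
  have hb0 : 0 ≤ b := ENNReal.toReal_nonneg
  have hexp1 : (1/hconj p).toReal = 1 - a := by
    rw [hconj, one_div, inv_inv, ENNReal.toReal_sub_of_le h1p_le ENNReal.one_ne_top,
      ENNReal.toReal_one, ← ha_def]
  have h3q : 3/q ≤ (1:ℝ≥0∞) := by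
    calc (3:ℝ≥0∞)/q ≤ 3/4 := ENNReal.div_le_div_left hq.le 3
      _ ≤ 1 := by
          rw [ENNReal.div_le_iff (by norm_num) (by norm_num)]
          norm_num
  have h3q_toReal : ((3:ℝ≥0∞)/q).toReal = 3 * b := by
    have : (3:ℝ≥0∞)/q = 3 * q⁻¹ := by rw [ENNReal.div_eq_inv_mul]; ring
    rw [this, ENNReal.toReal_mul, hb_def, one_div]
    norm_num
  have hpq : 1/p ≤ 1 - 3/q := by
    have h1 : p⁻¹ ≤ (hconj (q/3))⁻¹ := ENNReal.inv_le_inv.mpr hp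
    rw [hconj, inv_inv, one_div,
      ENNReal.inv_div (Or.inl (by norm_num)) (Or.inl (by norm_num))] at h1
    rw [one_div]
    exact h1
  have hab : a + 3*b ≤ 1 := by
    have h2 : a ≤ ((1:ℝ≥0∞) - 3/q).toReal := by
      rw [ha_def]
      exact ENNReal.toReal_mono (ne_top_of_le_ne_top ENNReal.one_ne_top tsub_le_self) hpq
    rw [ENNReal.toReal_sub_of_le h3q ENNReal.one_ne_top, ENNReal.toReal_one,
      h3q_toReal] at h2
    linarith
  -- ==================== geometric setup ====================
  have hfin : ∀ i, ℓ i ≠ ⊤ := fun i => (hℓ i).2.ne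
  set r : Fin d → ℝ := fun i => (ℓ i).toReal with hr_def
  have hrpos : ∀ i, 0 < r i := fun i => ENNReal.toReal_pos (hℓ i).1.ne' (hℓ i).2.ne
  set L : ℝ := r ⟨d-1, by omega⟩ with hL_def
  have hLpos : 0 < L := hrpos _
  have hL0 : L ≠ 0 := hLpos.ne'
  have hd0' : (d:ℝ) ≠ 0 := hd0.ne'
  have hQR : Qset d ℓ = Rbox d r := Qset_eq_Rbox d ℓ hfin
  have hEmeas : MeasurableSet (Qset d ℓ) := hQR ▸ measurableSet_Rbox d r
  set u : ℝ := ∏ i ∈ Finset.univ.filter (fun i : Fin d => (i : ℕ) < d - 1), r i with hu_def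
  have hu : 0 < u := Finset.prod_pos (fun i _ => hrpos i)
  have hsidep : sidep d ℓ (d-1) = ENNReal.ofReal u := by
    rw [sidep, hu_def, ENNReal.ofReal_prod_of_nonneg (fun i _ => (hrpos i).le)]
    exact Finset.prod_congr rfl fun i _ => (ENNReal.ofReal_toReal (hfin i)).symm
  have hlast : ℓ (⟨d-1, by omega⟩ : Fin d) = ENNReal.ofReal L :=
    (ENNReal.ofReal_toReal (hfin _)).symm
  have hprod_split : ∏ i, r i = u * L := by
    rw [← Finset.prod_filter_mul_prod_filter_not Finset.univ
      (fun i : Fin d => (i : ℕ) < d - 1), ← hu_def]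
    congr 1
    have hsingle : Finset.univ.filter (fun i : Fin d => ¬ (i : ℕ) < d - 1)
        = {(⟨d-1, by omega⟩ : Fin d)} := by
      ext i
      simp only [Finset.mem_filter, Finset.mem_univ, true_and, Finset.mem_singleton,
        Fin.ext_iff, not_lt]
      constructor
      · intro h; have := i.isLt; omega
      · intro h; omega
    rw [hsingle, Finset.prod_singleton, hL_def]
  set t₀ : ℝ := 1/(6 * (d:ℝ)^4 * L^2) with ht₀_def
  have ht₀pos : 0 < t₀ := by
    rw [ht₀_def]
    exact one_div_pos.mpr (mul_pos (by positivity) (pow_pos hLpos 2))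
  set x₀ : Fin d → ℝ := fun i => 1/(2*(d:ℝ)*(r i)) with hx₀_def
  have hx₀pos : ∀ i, 0 < x₀ i := fun i =>
    one_div_pos.mpr (mul_pos (mul_pos two_pos hd0) (hrpos i))
  set VE : ℝ := ∏ i, (2 * r i) with hVE_def
  set VF : ℝ := (2*t₀) * ∏ i, (2 * x₀ i) with hVF_def
  have hVEpos : 0 < VE := Finset.prod_pos fun i _ => mul_pos two_pos (hrpos i)
  have hVFpos : 0 < VF := by
    rw [hVF_def]
    exact mul_pos (mul_pos two_pos ht₀pos)
      (Finset.prod_pos fun i _ => mul_pos two_pos (hx₀pos i))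
  have hvolE : volume (Qset d ℓ) = ENNReal.ofReal VE := by
    rw [hQR, volume_Rbox, ← ENNReal.ofReal_prod_of_nonneg
      (fun i _ => (mul_pos two_pos (hrpos i)).le), hVE_def]
  set FF : Set (ℝ × Euc d) := Ioo (-t₀) t₀ ×ˢ Rbox d x₀ with hFF_def
  have hFmeas : MeasurableSet FF := measurableSet_Ioo.prod (measurableSet_Rbox d x₀)
  have hvolF : volume FF = ENNReal.ofReal VF := by
    rw [hFF_def, Measure.volume_eq_prod, Measure.prod_prod, Real.volume_Ioo, volume_Rbox,
      ← ENNReal.ofReal_prod_of_nonneg (fun i _ => (mul_pos two_pos (hx₀pos i)).le),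
      ← ENNReal.ofReal_mul (by linarith [ht₀pos]), hVF_def]
    congr 1
    ring
  have hVE_eq : VE = W * (u * L) := by
    rw [hVE_def, Finset.prod_mul_distrib, Finset.prod_const, Finset.card_univ,
      Fintype.card_fin, hprod_split, hW_def]
  have hVF_eq : VF = K * u⁻¹ * (L*L*L)⁻¹ := by
    have h2x : ∀ i : Fin d, 2 * x₀ i = ((d:ℝ) * r i)⁻¹ := fun i => by
      have h1 : (d:ℝ) ≠ 0 := hd0'
      have h2 : r i ≠ 0 := (hrpos i).ne'
      rw [hx₀_def]
      field_simp
    have hprodx : ∏ i, (2 * x₀ i) = ((d:ℝ)^d * (u * L))⁻¹ := by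
      rw [Finset.prod_congr rfl (fun i _ => h2x i), Finset.prod_inv_distrib,
        Finset.prod_mul_distrib, Finset.prod_const, Finset.card_univ, Fintype.card_fin,
        hprod_split]
    rw [hVF_def, hprodx, ht₀_def, hK_def]
    have hu0 : u ≠ 0 := hu.ne'
    field_simp
    ring
  have hEfin : volume (Qset d ℓ) < ⊤ := by rw [hvolE]; exact ENNReal.ofReal_lt_top
  have hEpos : 0 < volume (Qset d ℓ) := by
    rw [hvolE]; exact ENNReal.ofReal_pos.mpr hVEpos
  have hFfin : volume FF < ⊤ := by rw [hvolF]; exact ENNReal.ofReal_lt_top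
  have hFpos : 0 < volume FF := by rw [hvolF]; exact ENNReal.ofReal_pos.mpr hVFpos
  -- ==================== phase bound ====================
  have hrL : ∀ i, r i ≤ L := by
    intro i
    rw [hL_def]
    exact ENNReal.toReal_mono (hfin _) (hmono (Fin.le_def.mpr (Nat.le_pred_of_lt i.isLt)))
  have hgval : ∀ ξ ∈ Qset d ℓ, |g ξ| ≤ 3 * (d:ℝ)^4 * L^2 := by
    intro ξ hξ
    have := g_val_bound hd hℓ hmono hg hε₀lt.le ξ hξ
    rw [hL_def, hr_def]
    exact this
  have hφb : ∀ y ∈ FF, ∀ ξ ∈ Qset d ℓ, |y.1 * g ξ + ⟪ξ, y.2⟫| ≤ 1 := by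
    rintro ⟨t, x⟩ hy ξ hξ
    rw [hFF_def, Set.mem_prod] at hy
    obtain ⟨ht, hx⟩ := hy
    have ht' : |t| ≤ t₀ := by
      rw [abs_le]
      exact ⟨(Set.mem_Ioo.1 ht).1.le, (Set.mem_Ioo.1 ht).2.le⟩
    have h1 : |t * g ξ| ≤ 1/2 := by
      rw [abs_mul]
      calc |t| * |g ξ| ≤ t₀ * (3 * (d:ℝ)^4 * L^2) :=
            mul_le_mul ht' (hgval ξ hξ) (abs_nonneg _) ht₀pos.le
        _ = 1/2 := by rw [ht₀_def]; field_simp; ring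
    have hξr : ∀ i, |ξ i| < r i := by rw [hQR] at hξ; exact hξ
    have h2 : |(⟪ξ, x⟫ : ℝ)| ≤ 1/2 := by
      have hinner : (⟪ξ, x⟫ : ℝ) = ∑ i, ξ i * x i := by
        simp [PiLp.inner_apply, RCLike.inner_apply, conj_trivial]
        exact Finset.sum_congr rfl fun _ _ => mul_comm _ _
      rw [hinner]
      calc |∑ i, ξ i * x i| ≤ ∑ i, |ξ i * x i| := Finset.abs_sum_le_sum_abs _ _
        _ ≤ ∑ _i : Fin d, 1/(2*(d:ℝ)) := by
            refine Finset.sum_le_sum fun i _ => ?_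
            rw [abs_mul]
            have hb1 : |ξ i| ≤ r i := (hξr i).le
            have hb2 : |x i| ≤ x₀ i := (hx i).le
            calc |ξ i| * |x i| ≤ r i * x₀ i :=
                  mul_le_mul hb1 hb2 (abs_nonneg _) (hrpos i).le
              _ = 1/(2*(d:ℝ)) := by
                  have h1 : (d:ℝ) ≠ 0 := hd0'
                  have h2 : r i ≠ 0 := (hrpos i).ne'
                  rw [hx₀_def]
                  field_simp
        _ = 1/2 := by
            rw [Finset.sum_const, Finset.card_univ, Fintype.card_fin, nsmul_eq_mul]
            have h1 : (d:ℝ) ≠ 0 := hd0'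
            field_simp
    calc |t * g ξ + ⟪ξ, x⟫| ≤ |t * g ξ| + |(⟪ξ, x⟫ : ℝ)| := abs_add_le _ _
      _ ≤ 1 := by linarith
  -- ==================== the oscillatory integral ====================
  set fE : Euc d → ℂ := (Qset d ℓ).indicator (fun _ => (1:ℂ)) with hfE_def
  set gF : ℝ × Euc d → ℂ := FF.indicator (fun _ => (1:ℂ)) with hgF_def
  set J : (ℝ × Euc d) → ℂ := fun y =>
    ∫ ξ in Qset d ℓ, Complex.exp (Complex.I * ((y.1 * g ξ + inner ℝ ξ y.2 : ℝ) : ℂ)) with hJ_def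
  have hker_cont : ∀ y : ℝ × Euc d, ContinuousOn
      (fun ξ : Euc d => Complex.exp (Complex.I * ((y.1 * g ξ + inner ℝ ξ y.2 : ℝ) : ℂ)))
      (Qset d ℓ) := by
    intro y
    refine Complex.continuous_exp.comp_continuousOn ?_
    refine continuousOn_const.mul ?_
    refine Complex.continuous_ofReal.comp_continuousOn ?_
    exact (continuousOn_const.mul hg.smooth.continuousOn).add
      ((continuous_id.inner continuous_const).continuousOn)
  have hker_meas : ∀ y : ℝ × Euc d, AEStronglyMeasurable
      (fun ξ : Euc d => Complex.exp (Complex.I * ((y.1 * g ξ + inner ℝ ξ y.2 : ℝ) : ℂ)))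
      (volume.restrict (Qset d ℓ)) := fun y =>
    (hker_cont y).aestronglyMeasurable hEmeas
  have hker_norm : ∀ (y : ℝ × Euc d) (ξ : Euc d),
      ‖Complex.exp (Complex.I * ((y.1 * g ξ + inner ℝ ξ y.2 : ℝ) : ℂ))‖ = 1 := by
    intro y ξ
    rw [mul_comm, Complex.norm_exp_ofReal_mul_I]
  have hker_int : ∀ y : ℝ × Euc d, IntegrableOn
      (fun ξ : Euc d => Complex.exp (Complex.I * ((y.1 * g ξ + inner ℝ ξ y.2 : ℝ) : ℂ)))
      (Qset d ℓ) := by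
    intro y
    refine Integrable.mono' (g := fun _ => (1:ℝ))
      (integrableOn_const hEfin.ne) (hker_meas y) ?_
    exact Filter.Eventually.of_forall fun ξ => le_of_eq (hker_norm y ξ)
  have hJcont : Continuous J := by
    rw [hJ_def]
    refine continuous_of_dominated hker_meas
      (fun y => Filter.Eventually.of_forall fun ξ => le_of_eq (hker_norm y ξ))
      (integrableOn_const hEfin.ne) ?_
    refine Filter.Eventually.of_forall fun ξ => ?_
    refine Complex.continuous_exp.comp ?_
    refine continuous_const.mul ?_
    refine Complex.continuous_ofReal.comp ?_
    exact (continuous_fst.mul continuous_const).add (continuous_const.inner continuous_snd)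
  have hJnorm : ∀ y, ‖J y‖ ≤ (volume (Qset d ℓ)).toReal := by
    intro y
    rw [hJ_def]
    have := norm_setIntegral_le_of_norm_le_const_ae' (C := 1) hEfin
      (Filter.Eventually.of_forall fun ξ _ => le_of_eq (hker_norm y ξ))
    simpa [Measure.real] using this
  have hJint : IntegrableOn J FF := by
    refine Integrable.mono' (g := fun _ => (volume (Qset d ℓ)).toReal)
      (integrableOn_const hFfin.ne) hJcont.aestronglyMeasurable.restrict ?_
    exact Filter.Eventually.of_forall hJnorm
  -- pairing = ∫_F J
  have hext : ∀ y, extOp d ℓ g fE y = J y := by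
    intro y
    rw [extOp, hJ_def]
    refine setIntegral_congr_fun hEmeas fun ξ hξ => ?_
    rw [hfE_def, Set.indicator_of_mem hξ, mul_one]
  have hpair : pairing d (extOp d ℓ g fE) gF = ∫ y in FF, J y := by
    rw [pairing]
    have hins : ∀ y, extOp d ℓ g fE y * (starRingEnd ℂ) (gF y) = FF.indicator J y := by
      intro y
      by_cases hy : y ∈ FF
      · rw [hgF_def, Set.indicator_of_mem hy, Set.indicator_of_mem hy, map_one, mul_one,
          hext y]
      · rw [hgF_def, Set.indicator_of_notMem hy, Set.indicator_of_notMem hy, map_zero,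
          mul_zero]
    rw [integral_congr_ae (Filter.Eventually.of_forall hins), integral_indicator hFmeas]
  -- real part lower bounds
  have hre_inner : ∀ y ∈ FF, 1/2 * (volume (Qset d ℓ)).toReal ≤ (J y).re := by
    intro y hy
    have h1 : ∫ ξ in Qset d ℓ, Complex.reCLM
        (Complex.exp (Complex.I * ((y.1 * g ξ + inner ℝ ξ y.2 : ℝ) : ℂ)))
        = Complex.reCLM (J y) := by
      rw [hJ_def]
      exact ContinuousLinearMap.integral_comp_comm Complex.reCLM (hker_int y)
    have h2 : ∀ ξ, Complex.reCLM
        (Complex.exp (Complex.I * ((y.1 * g ξ + inner ℝ ξ y.2 : ℝ) : ℂ)))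
        = Real.cos (y.1 * g ξ + inner ℝ ξ y.2) := by
      intro ξ
      rw [Complex.reCLM_apply, mul_comm, Complex.exp_ofReal_mul_I_re]
    have h3 : IntegrableOn
        (fun ξ : Euc d => Real.cos (y.1 * g ξ + inner ℝ ξ y.2)) (Qset d ℓ) := by
      refine ((hker_int y).re).congr ?_
      exact Filter.Eventually.of_forall fun ξ => (h2 ξ)
    have h4 := setIntegral_ge_of_const_le (c := 1/2) hEmeas hEfin.ne
      (fun ξ hξ => half_le_cos (hφb y hy ξ hξ)) h3
    have h5 : ∫ ξ in Qset d ℓ, Real.cos (y.1 * g ξ + inner ℝ ξ y.2)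
        = (J y).re := by
      rw [← Complex.reCLM_apply, ← h1]
      exact setIntegral_congr_fun hEmeas fun ξ _ => (h2 ξ).symm
    rw [← h5]
    exact (mul_comm _ _).trans_le h4
  have houter : 1/2 * (volume (Qset d ℓ)).toReal * (volume FF).toReal
      ≤ ∫ y in FF, (J y).re := by
    exact (mul_comm _ _).trans_le (setIntegral_ge_of_const_le hFmeas hFfin.ne hre_inner hJint.re)
  have hre_pair : (pairing d (extOp d ℓ g fE) gF).re = ∫ y in FF, (J y).re := by
    rw [hpair, ← Complex.reCLM_apply,
      ← ContinuousLinearMap.integral_comp_comm Complex.reCLM hJint]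
    exact setIntegral_congr_fun hFmeas fun y _ => rfl
  have hnorm_pair : 1/2 * VE * VF ≤ ‖pairing d (extOp d ℓ g fE) gF‖ := by
    have hVEt : (volume (Qset d ℓ)).toReal = VE := by
      rw [hvolE, ENNReal.toReal_ofReal hVEpos.le]
    have hVFt : (volume FF).toReal = VF := by
      rw [hvolF, ENNReal.toReal_ofReal hVFpos.le]
    have h6 : 1/2 * VE * VF ≤ (pairing d (extOp d ℓ g fE) gF).re := by
      rw [hre_pair, ← hVEt, ← hVFt]
      exact houter
    calc 1/2 * VE * VF ≤ (pairing d (extOp d ℓ g fE) gF).re := h6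
      _ ≤ |(pairing d (extOp d ℓ g fE) gF).re| := le_abs_self _
      _ ≤ ‖pairing d (extOp d ℓ g fE) gF‖ := Complex.abs_re_le_norm _
      _ = ‖pairing d (extOp d ℓ g fE) gF‖ := rfl
  -- ==================== supremum instantiation ====================
  have hfEmeas : Measurable fE := measurable_const.indicator hEmeas
  have hgFmeas : Measurable gF := measurable_const.indicator hFmeas
  have hfEbd : ∀ x, ‖fE x‖ ≤ (Qset d ℓ).indicator (fun _ => (1:ℝ)) x := by
    intro x
    by_cases hx : x ∈ Qset d ℓ <;>
      simp [hfE_def, Set.indicator_of_mem, Set.indicator_of_notMem, hx]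
  have hgFbd : ∀ y, ‖gF y‖ ≤ FF.indicator (fun _ => (1:ℝ)) y := by
    intro y
    by_cases hy : y ∈ FF <;>
      simp [hgF_def, Set.indicator_of_mem, Set.indicator_of_notMem, hy]
  rw [rwtNorm, rwtNormOp]
  refine le_trans ?_ (le_iSup_of_le (Qset d ℓ) (le_iSup_of_le FF (le_iSup_of_le fE
    (le_iSup_of_le gF (le_iSup_of_le hEmeas (le_iSup_of_le subset_rfl
    (le_iSup_of_le hEpos (le_iSup_of_le hEfin (le_iSup_of_le hFmeas
    (le_iSup_of_le hFpos (le_iSup_of_le hFfin (le_iSup_of_le hfEmeas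
    (le_iSup_of_le hfEbd (le_iSup_of_le hgFmeas (le_iSup_of_le hgFbd
    (le_refl _))))))))))))))))
  -- ==================== final arithmetic ====================
  have hden : volume (Qset d ℓ) ^ a * volume FF ^ (1-b)
      = ENNReal.ofReal (VE^a * VF^(1-b)) := by
    rw [hvolE, hvolF, ENNReal.ofReal_rpow_of_pos hVEpos, ENNReal.ofReal_rpow_of_pos hVFpos,
      ← ENNReal.ofReal_mul (by positivity)]
  have hLHS : ENNReal.ofReal (1/2 * W^(1-a) * K^b)
        * sidep d ℓ (d - 1) ^ ((1 / hconj p).toReal - b)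
        * ℓ (⟨d-1, by omega⟩ : Fin d) ^ (1 - 3*b - a)
      = ENNReal.ofReal ((1/2 * W^(1-a) * K^b) * u^(1-a-b) * L^(1-3*b-a)) := by
    rw [hexp1, hsidep, hlast, ENNReal.ofReal_rpow_of_pos hu, ENNReal.ofReal_rpow_of_pos hLpos,
      ← ENNReal.ofReal_mul (by positivity), ← ENNReal.ofReal_mul (by positivity)]
  have hreal : (1/2 * W^(1-a) * K^b) * u^(1-a-b) * L^(1-3*b-a)
      ≤ (1/2 * VE * VF) / (VE^a * VF^(1-b)) := by
    rw [le_div_iff₀ (by positivity)]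
    have hkey := rpow_identity W K u L a b hWpos hKpos hu hLpos
    rw [hVE_eq, hVF_eq]
    refine le_of_eq ?_
    calc (1/2 * W^(1-a) * K^b) * u^(1-a-b) * L^(1-3*b-a)
          * ((W * (u * L))^a * (K * u⁻¹ * (L*L*L)⁻¹)^(1-b))
        = 1/2 * (W*(u*L)) * (K * u⁻¹ * (L*L*L)⁻¹) := hkey
      _ = 1/2 * (W * (u * L)) * (K * u⁻¹ * (L*L*L)⁻¹) := by ring
  calc ENNReal.ofReal (1/2 * W^(1-a) * K^b)
        * sidep d ℓ (d - 1) ^ ((1 / hconj p).toReal - b)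
        * ℓ (⟨d-1, by omega⟩ : Fin d) ^ (1 - 3*b - a)
      = ENNReal.ofReal ((1/2 * W^(1-a) * K^b) * u^(1-a-b) * L^(1-3*b-a)) := hLHS
    _ ≤ ENNReal.ofReal ((1/2 * VE * VF) / (VE^a * VF^(1-b))) :=
        ENNReal.ofReal_le_ofReal hreal
    _ = ENNReal.ofReal (1/2 * VE * VF) / ENNReal.ofReal (VE^a * VF^(1-b)) :=
        ENNReal.ofReal_div_of_pos (by positivity)
    _ ≤ ENNReal.ofReal ‖pairing d (extOp d ℓ g fE) gF‖ / ENNReal.ofReal (VE^a * VF^(1-b)) :=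
        ENNReal.div_le_div_right (ENNReal.ofReal_le_ofReal hnorm_pair) _
    _ = ENNReal.ofReal ‖pairing d (extOp d ℓ g fE) gF‖ /
        (volume (Qset d ℓ) ^ a * volume FF ^ (1-b)) := by rw [hden]

end mainthm
end
end
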